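/- arXiv:1510.05982 — 7 statements merged into one kernel-verified Lean document; each statement's English description precedes it below -/
import Mathlib

section
/- Let V = {v₁,…,v_n} be a finite set equipped with a weight function w: V → ℝ≥0 such that w(v₁) ≥ w(v₂) ≥ … ≥ w(v_n), let Y ⊆ V, and let s > 0 be a real. If X is an s-sparse subset of Y, then w(X) ≤ (1/s)·w(Y), where w(A) denotes Σ_{v∈A} w(v). -/
/-- The set of the first `k` elements of `Y` in the linear order. -/
def firstK {V : Type*} [LinearOrder V] (Y : Finset V) (k : ℕ) : Finset V :=
  ((Y.sort (· ≤ ·)).take k).toFinset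

open Finset

/-- If a predicate is "downward closed" along a pairwise-related list,
filtering equals takeWhile. -/
lemma filter_eq_takeWhile_of_pairwise {α : Type*} {R : α → α → Prop} {p : α → Bool}
    (hp : ∀ a b, R a b → p b = true → p a = true) :
    ∀ l : List α, l.Pairwise R → l.filter p = l.takeWhile p := by
  intro l
  induction l with
  | nil => intro _; rfl
  | cons a l ih =>
    intro hl
    rw [List.pairwise_cons] at hl
    by_cases ha : p a = true
    · rw [List.filter_cons_of_pos ha, List.takeWhile_cons_of_pos ha, ih hl.2]
    · rw [List.filter_cons_of_neg ha, List.takeWhile_cons_of_neg ha]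
      rw [List.filter_eq_nil_iff]
      intro b hb hpb
      exact ha (hp a b (hl.1 b hb) hpb)

lemma firstK_mono {V : Type*} [LinearOrder V] (Y : Finset V) {k k' : ℕ} (h : k ≤ k') :
    firstK Y k ⊆ firstK Y k' := by
  intro x hx
  simp only [firstK, List.mem_toFinset] at hx ⊢
  have : (Y.sort (· ≤ ·)).take k = ((Y.sort (· ≤ ·)).take k').take k := by
    rw [List.take_take, min_eq_left h]
  rw [this] at hx
  exact List.take_subset _ _ hx

lemma filter_eq_firstK {V : Type*} [LinearOrder V] (w : V → ℝ) (hw : Antitone w)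
    (Y : Finset V) (t : ℝ) :
    Y.filter (fun v => t < w v) = firstK Y (Y.filter (fun v => t < w v)).card := by
  classical
  set L := Y.sort (· ≤ ·) with hL
  set p : V → Bool := fun v => decide (t < w v) with hp
  have hfilter : (L.filter p).toFinset = Y.filter (fun v => t < w v) := by
    rw [List.toFinset_filter, Finset.sort_toFinset]
    simp [hp]
  have hFT : L.filter p = L.takeWhile p := by
    refine filter_eq_takeWhile_of_pairwise ?_ L (Y.pairwise_sort (· ≤ ·))
    intro a b hab hpb
    simp only [hp, decide_eq_true_eq] at hpb ⊢
    exact lt_of_lt_of_le hpb (hw hab)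
  have hcard : (Y.filter (fun v => t < w v)).card = (L.filter p).length := by
    rw [← hfilter, List.toFinset_card_of_nodup]
    exact (Y.sort_nodup (· ≤ ·)).filter p
  have htake : L.take (L.filter p).length = L.filter p := by
    rw [hFT]
    exact (List.prefix_iff_eq_take.1 (List.takeWhile_prefix p)).symm
  rw [firstK, hcard, ← hL, htake, hfilter]
/-- A nonempty subset `X ⊆ Y` is `s`-principal in `Y` if `X ⊆ Y_{s·|X|}`,
i.e. all elements of `X` are among the first `⌊s·|X|⌋` elements of `Y`. -/
def IsPrincipalIn {V : Type*} [LinearOrder V] (s : ℝ) (Y X : Finset V) : Prop :=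
  X.Nonempty ∧ X ⊆ firstK Y ⌊s * (X.card : ℝ)⌋₊

/-- A subset `X` is `s`-sparse in `Y` if it contains no `s`-principal subset in `Y`. -/
def IsSparseIn {V : Type*} [LinearOrder V] (s : ℝ) (Y X : Finset V) : Prop :=
  ∀ Z ⊆ X, ¬ IsPrincipalIn s Y Z

lemma sparse_level_card {V : Type*} [LinearOrder V] (w : V → ℝ) (hw : Antitone w)
    {Y X : Finset V} {s : ℝ} (hs : 0 < s) (hXY : X ⊆ Y) (hX : IsSparseIn s Y X) (t : ℝ) :
    s * ((X.filter fun v => t < w v).card : ℝ) ≤ ((Y.filter fun v => t < w v).card : ℝ) := by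
  classical
  set Xt := X.filter (fun v => t < w v) with hXt
  set Yt := Y.filter (fun v => t < w v) with hYt
  rcases Xt.eq_empty_or_nonempty with he | hne
  · rw [he]; simp
  · have hsub : Xt ⊆ Yt := Finset.filter_subset_filter _ hXY
    have hYfk : Yt = firstK Y Yt.card := filter_eq_firstK w hw Y t
    have hnotp : ¬ IsPrincipalIn s Y Xt := hX Xt (Finset.filter_subset _ _)
    have hlt : ⌊s * (Xt.card : ℝ)⌋₊ < Yt.card := by
      by_contra hge
      push_neg at hge
      exact hnotp ⟨hne, hsub.trans (hYfk ▸ firstK_mono Y hge)⟩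
    have h1 : s * (Xt.card : ℝ) < (⌊s * (Xt.card : ℝ)⌋₊ : ℝ) + 1 := Nat.lt_floor_add_one _
    have h2 : (⌊s * (Xt.card : ℝ)⌋₊ : ℝ) + 1 ≤ (Yt.card : ℝ) := by
      exact_mod_cast Nat.succ_le_of_lt hlt
    linarith

lemma key_sum_le {V : Type*} [DecidableEq V] {s : ℝ} :
    ∀ (n : ℕ) (w : V → ℝ) (A B : Finset V),
      (∀ v ∈ A ∪ B, 0 ≤ w v) →
      (((A ∪ B).image w).erase 0).card ≤ n →
      (∀ t : ℝ, s * ((A.filter fun v => t < w v).card : ℝ) ≤ ((B.filter fun v => t < w v).card : ℝ)) →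
      s * ∑ v ∈ A, w v ≤ ∑ v ∈ B, w v := by
  intro n
  induction n with
  | zero =>
    intro w A B hnn hcard _
    have hzero : ∀ v ∈ A ∪ B, w v = 0 := by
      intro v hv
      by_contra h0
      have : w v ∈ ((A ∪ B).image w).erase 0 :=
        Finset.mem_erase.2 ⟨h0, Finset.mem_image_of_mem w hv⟩
      have := Finset.card_pos.2 ⟨_, this⟩
      omega
    have hA : ∑ v ∈ A, w v = 0 :=
      Finset.sum_eq_zero fun v hv => hzero v (Finset.mem_union_left _ hv)
    have hB : ∑ v ∈ B, w v = 0 :=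
      Finset.sum_eq_zero fun v hv => hzero v (Finset.mem_union_right _ hv)
    rw [hA, hB]; simp
  | succ n ih =>
    intro w A B hnn hcard hlev
    set S := ((A ∪ B).image w).erase 0 with hS
    rcases S.eq_empty_or_nonempty with he | hSne
    · -- all weights zero
      have hzero : ∀ v ∈ A ∪ B, w v = 0 := by
        intro v hv
        by_contra h0
        have : w v ∈ S := Finset.mem_erase.2 ⟨h0, Finset.mem_image_of_mem w hv⟩
        rw [he] at this
        exact absurd this (Finset.notMem_empty _)
      have hA : ∑ v ∈ A, w v = 0 :=
        Finset.sum_eq_zero fun v hv => hzero v (Finset.mem_union_left _ hv)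
      have hB : ∑ v ∈ B, w v = 0 :=
        Finset.sum_eq_zero fun v hv => hzero v (Finset.mem_union_right _ hv)
      rw [hA, hB]; simp
    · set M := S.max' hSne with hM
      have hMS : M ∈ S := S.max'_mem hSne
      have hMimg : M ∈ (A ∪ B).image w := (Finset.mem_erase.1 hMS).2
      have hMpos : 0 < M := by
        obtain ⟨v, hv, hvw⟩ := Finset.mem_image.1 hMimg
        have := hnn v hv
        have hne0 := (Finset.mem_erase.1 hMS).1
        rw [← hvw] at hne0 ⊢
        exact lt_of_le_of_ne this (Ne.symm hne0)
      set m : ℝ := if h : (S.erase M).Nonempty then (S.erase M).max' h else 0 with hm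
      have hm0 : 0 ≤ m := by
        rw [hm]
        split_ifs with h
        · have hmem : (S.erase M).max' h ∈ S.erase M := Finset.max'_mem _ _
          have hmem2 : (S.erase M).max' h ∈ (A ∪ B).image w :=
            (Finset.mem_erase.1 (Finset.mem_erase.1 hmem).2).2
          obtain ⟨v, hv, hvw⟩ := Finset.mem_image.1 hmem2
          rw [← hvw]; exact hnn v hv
        · exact le_rfl
      have hmM : m < M := by
        rw [hm]
        split_ifs with h
        · have hmem := Finset.max'_mem _ h
          have h1 := (Finset.mem_erase.1 hmem).1
          have h2 := S.le_max' _ (Finset.mem_erase.1 hmem).2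
          exact lt_of_le_of_ne h2 h1
        · exact hMpos
      -- dichotomy for values
      have hdich : ∀ v ∈ A ∪ B, w v ≤ m ∨ w v = M := by
        intro v hv
        by_cases h0 : w v = 0
        · left; rw [h0]; exact hm0
        · have hvS : w v ∈ S := Finset.mem_erase.2 ⟨h0, Finset.mem_image_of_mem w hv⟩
          by_cases hvM : w v = M
          · right; exact hvM
          · left
            have hvS' : w v ∈ S.erase M := Finset.mem_erase.2 ⟨hvM, hvS⟩
            have hne : (S.erase M).Nonempty := ⟨_, hvS'⟩
            rw [hm, dif_pos hne]
            exact Finset.le_max' _ _ hvS'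
      set w' : V → ℝ := fun v => min (w v) m with hw'
      have hw'v : ∀ v, w' v = min (w v) m := fun v => rfl
      -- pointwise identity
      have hpt : ∀ v ∈ A ∪ B, w v = w' v + (M - m) * (if m < w v then 1 else 0) := by
        intro v hv
        rcases hdich v hv with h | h
        · rw [if_neg (not_lt.2 h), hw'v, min_eq_left h]
          ring
        · have h1 : m < w v := by rw [h]; exact hmM
          rw [if_pos h1, hw'v, min_eq_right h1.le, h]
          ring
      have hsplit : ∀ (C : Finset V), C ⊆ A ∪ B →
          ∑ v ∈ C, w v = ∑ v ∈ C, w' v + (M - m) * ((C.filter fun v => m < w v).card : ℝ) := by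
        intro C hC
        classical
        calc ∑ v ∈ C, w v
            = ∑ v ∈ C, (w' v + (M - m) * (if m < w v then 1 else 0)) :=
              Finset.sum_congr rfl fun v hv => hpt v (hC hv)
          _ = ∑ v ∈ C, w' v + (M - m) * ∑ v ∈ C, (if m < w v then (1:ℝ) else 0) := by
              rw [Finset.sum_add_distrib, Finset.mul_sum]
          _ = ∑ v ∈ C, w' v + (M - m) * ((C.filter fun v => m < w v).card : ℝ) := by
              rw [Finset.sum_boole]
      -- hypotheses for w'
      have hnn' : ∀ v ∈ A ∪ B, 0 ≤ w' v := fun v hv => le_min (hnn v hv) hm0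
      have hcard' : (((A ∪ B).image w').erase 0).card ≤ n := by
        have hsub : ((A ∪ B).image w').erase 0 ⊆ S.erase M := by
          intro u hu
          obtain ⟨hu0, huimg⟩ := Finset.mem_erase.1 hu
          obtain ⟨v, hv, hvw⟩ := Finset.mem_image.1 huimg
          rcases hdich v hv with h | h
          · have hue : u = w v := by rw [← hvw, hw'v, min_eq_left h]
            rw [hue] at hu0 ⊢
            refine Finset.mem_erase.2 ⟨?_, Finset.mem_erase.2 ⟨hu0, Finset.mem_image_of_mem w hv⟩⟩
            intro hc
            rw [hc] at h
            linarith
          · have hum : u = m := by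
              rw [← hvw, hw'v]
              rw [h]
              exact min_eq_right hmM.le
            have hne : (S.erase M).Nonempty := by
              by_contra hc
              rw [hm, dif_neg hc] at hum
              exact hu0 hum
            rw [hum, hm, dif_pos hne]
            exact Finset.max'_mem _ hne
        calc (((A ∪ B).image w').erase 0).card ≤ (S.erase M).card := Finset.card_le_card hsub
          _ = S.card - 1 := Finset.card_erase_of_mem hMS
          _ ≤ n := by omega
      have hlev' : ∀ t : ℝ, s * ((A.filter fun v => t < w' v).card : ℝ) ≤ ((B.filter fun v => t < w' v).card : ℝ) := by
        intro t
        by_cases ht : t < m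
        · have heq : ∀ (C : Finset V), (C.filter fun v => t < w' v) = (C.filter fun v => t < w v) := by
            intro C
            apply Finset.filter_congr
            intro v _
            rw [hw'v]
            simp only [lt_min_iff]
            constructor
            · exact fun h => h.1
            · exact fun h => ⟨h, ht⟩
          rw [heq, heq]
          exact hlev t
        · have hempty : (A.filter fun v => t < w' v) = ∅ := by
            apply Finset.filter_false_of_mem
            intro v _
            rw [hw'v]
            exact not_lt.2 (le_trans (min_le_right _ _) (not_lt.1 ht))
          rw [hempty]
          simp
      have hih := ih w' A B hnn' hcard' hlev'
      have hsA := hsplit A Finset.subset_union_left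
      have hsB := hsplit B Finset.subset_union_right
      have hlevm := hlev m
      have hMm : 0 ≤ M - m := by linarith
      calc s * ∑ v ∈ A, w v
          = s * ∑ v ∈ A, w' v + (M - m) * (s * ((A.filter fun v => m < w v).card : ℝ)) := by
            rw [hsA]; ring
        _ ≤ ∑ v ∈ B, w' v + (M - m) * (((B.filter fun v => m < w v).card : ℝ)) :=
            add_le_add hih (mul_le_mul_of_nonneg_left hlevm hMm)
        _ = ∑ v ∈ B, w v := hsB.symm

/-- **Claim 2.3.** If the vertices are listed in non-increasing order of their
nonnegative weights (so `w` is antitone with respect to the linear order) and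
`X` is an `s`-sparse subset of `Y`, then `w(X) ≤ (1/s)·w(Y)`. -/
theorem weight_le_of_isSparseIn {V : Type*} [LinearOrder V] (w : V → ℝ)
    (hw0 : ∀ v, 0 ≤ w v) (hw : Antitone w) (Y X : Finset V) (s : ℝ) (hs : 0 < s)
    (hXY : X ⊆ Y) (hX : IsSparseIn s Y X) :
    ∑ v ∈ X, w v ≤ (1 / s) * ∑ v ∈ Y, w v := by
  classical
  have key : s * ∑ v ∈ X, w v ≤ ∑ v ∈ Y, w v :=
    key_sum_le (((X ∪ Y).image w).erase 0).card w X Y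
      (fun v _ => hw0 v) le_rfl (fun t => sparse_level_card w hw hs hXY hX t)
  rw [one_div, inv_mul_eq_div, le_div_iff₀ hs]
  linarith
end

section
/- Let G be a simple graph on a vertex set V = {v₁,…,v_n} with a fixed linear ordering of its vertices, let t be a real number, set d = 2·log₂(e·t²), and suppose t ≥ 2(d+1). Then there exists an orientation of the edges of G such that every t-principal vertex-set of G whose induced subgraph has average degree at least d contains a directed cycle under this orientation. -/
open Finset

/-- An orientation of a simple graph `G`: a relation choosing exactly one
direction for each edge of `G` (and relating no non-adjacent pair). -/
def IsOrientation {V : Type*} (G : SimpleGraph V) (D : V → V → Prop) : Prop :=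
  (∀ u v, D u v → G.Adj u v) ∧ ∀ u v, G.Adj u v → (D u v ↔ ¬ D v u)

/-- A set `A` of vertices is acyclic for the digraph `D` if the digraph induced
on `A` contains no directed cycle (no vertex reaches itself by a nonempty
directed walk inside `A`). -/
def IsAcyclicOn {V : Type*} (D : V → V → Prop) (A : Set V) : Prop :=
  ∀ x ∈ A, ¬ Relation.TransGen (fun a b => a ∈ A ∧ b ∈ A ∧ D a b) x x

/-- A set `A` of vertices contains a directed cycle of the digraph `D`. -/
def HasDirCycleOn {V : Type*} (D : V → V → Prop) (A : Set V) : Prop :=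
  ∃ x ∈ A, Relation.TransGen (fun a b => a ∈ A ∧ b ∈ A ∧ D a b) x x

/-- The average degree of the subgraph of `G` induced by the vertex-set `A`,
i.e. `2·e(G[A])/|A|` (the filter counts ordered adjacent pairs). -/
noncomputable def avgDeg {V : Type*} (G : SimpleGraph V) [DecidableRel G.Adj]
    (A : Finset V) : ℝ :=
  (((A ×ˢ A).filter fun p => G.Adj p.1 p.2).card : ℝ) / (A.card : ℝ)

section AuxCombinatorics

open Classical in
lemma exists_sink_aux {V : Type*} [DecidableEq V] (A : Finset V) (D : V → V → Prop)
    (hne : A.Nonempty) (hac : IsAcyclicOn D (A : Set V)) :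
    ∃ v ∈ A, ∀ u ∈ A, ¬ D v u := by
  induction A using Finset.strongInduction with
  | _ A ih =>
    obtain ⟨x, hx⟩ := hne
    set S : Finset V := A.filter (fun w =>
      Relation.TransGen (fun a b => a ∈ (A : Set V) ∧ b ∈ (A : Set V) ∧ D a b) x w) with hS
    by_cases hSe : S.Nonempty
    · have hxS : x ∉ S := by
        intro hxS
        exact hac x (by exact_mod_cast hx) (by simpa [hS] using (Finset.mem_filter.1 hxS).2)
      have hSsub : S ⊂ A := by
        refine Finset.ssubset_iff_of_subset (Finset.filter_subset _ _) |>.2 ⟨x, hx, hxS⟩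
      have hacS : IsAcyclicOn D (S : Set V) := by
        intro y hy hT
        refine hac y ?_ ?_
        · exact Finset.mem_coe.2 (Finset.filter_subset _ _ (Finset.mem_coe.1 hy))
        · refine Relation.TransGen.mono ?_ _ _ hT
          rintro a b ⟨ha, hb, hd⟩
          exact ⟨Finset.mem_coe.2 (Finset.filter_subset _ _ (Finset.mem_coe.1 ha)),
                 Finset.mem_coe.2 (Finset.filter_subset _ _ (Finset.mem_coe.1 hb)), hd⟩
      obtain ⟨v, hvS, hv⟩ := ih S hSsub hSe hacS
      refine ⟨v, Finset.filter_subset _ _ hvS, ?_⟩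
      intro u hu hDvu
      have hxv : Relation.TransGen (fun a b => a ∈ (A : Set V) ∧ b ∈ (A : Set V) ∧ D a b) x v :=
        (Finset.mem_filter.1 hvS).2
      have hxu : Relation.TransGen (fun a b => a ∈ (A : Set V) ∧ b ∈ (A : Set V) ∧ D a b) x u :=
        hxv.tail ⟨Finset.mem_coe.2 (Finset.filter_subset _ _ hvS), Finset.mem_coe.2 hu, hDvu⟩
      exact hv u (Finset.mem_filter.2 ⟨hu, hxu⟩) hDvu
    · refine ⟨x, hx, ?_⟩
      intro u hu hDxu
      refine hSe ⟨u, Finset.mem_filter.2 ⟨hu, ?_⟩⟩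
      exact Relation.TransGen.single ⟨Finset.mem_coe.2 hx, Finset.mem_coe.2 hu, hDxu⟩

open Classical in
lemma filter_card_erase_aux {V : Type*} [DecidableEq V] (A : Finset V) (P : V → Prop)
    (v : V) (hv : v ∈ A) :
    (A.filter P).card = ((A.erase v).filter P).card + (if P v then 1 else 0) := by
  conv_lhs => rw [← Finset.insert_erase hv]
  rw [Finset.filter_insert]
  by_cases hPv : P v
  · rw [if_pos hPv, if_pos hPv, Finset.card_insert_of_notMem
      (fun h => (Finset.mem_erase.1 (Finset.filter_subset _ _ h)).1 rfl)]
  · rw [if_neg hPv, if_neg hPv, add_zero]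

open Classical in
lemma acyclic_determined_aux {V : Type*} [DecidableEq V] (R : V → V → Prop)
    (A : Finset V) (D D' : V → V → Prop)
    (hD1 : ∀ u v, D u v → R u v) (hD2 : ∀ u v, R u v → (D u v ↔ ¬ D v u))
    (hD1' : ∀ u v, D' u v → R u v) (hD2' : ∀ u v, R u v → (D' u v ↔ ¬ D' v u))
    (hac : IsAcyclicOn D (A : Set V)) (hac' : IsAcyclicOn D' (A : Set V))
    (hdeg : ∀ v ∈ A, (A.filter fun u => D v u).card = (A.filter fun u => D' v u).card) :
    ∀ u ∈ A, ∀ v ∈ A, (D u v ↔ D' u v) := by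
  induction A using Finset.strongInduction with
  | _ A ih =>
    rcases A.eq_empty_or_nonempty with rfl | hne
    · intro u hu; exact absurd hu (by simp)
    obtain ⟨v₀, hv₀A, hv₀⟩ := exists_sink_aux A D hne hac
    have hv₀' : ∀ u ∈ A, ¬ D' v₀ u := by
      have h0 : (A.filter fun u => D v₀ u) = ∅ :=
        Finset.filter_eq_empty_iff.2 (fun {u} hu => hv₀ u hu)
      have h0' : (A.filter fun u => D' v₀ u).card = 0 := by
        rw [← hdeg v₀ hv₀A, h0, Finset.card_empty]
      intro u hu hD'
      have : u ∈ A.filter fun u => D' v₀ u := Finset.mem_filter.2 ⟨hu, hD'⟩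
      simpa [Finset.card_eq_zero.1 h0'] using this
    have hpair : ∀ u ∈ A, ((D u v₀ ↔ D' u v₀) ∧ (D v₀ u ↔ D' v₀ u)) := by
      intro u hu
      constructor
      · by_cases hr : R u v₀
        · rw [hD2 u v₀ hr, hD2' u v₀ hr]
          simp [hv₀ u hu, hv₀' u hu]
        · constructor
          · intro h; exact absurd (hD1 u v₀ h) hr
          · intro h; exact absurd (hD1' u v₀ h) hr
      · simp [hv₀ u hu, hv₀' u hu]
    set A' := A.erase v₀ with hA'
    have hsub : A' ⊂ A := Finset.erase_ssubset hv₀A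
    have hsubset : A' ⊆ A := Finset.erase_subset _ _
    have hacA' : IsAcyclicOn D (A' : Set V) := by
      intro y hy hT
      refine hac y (Finset.mem_coe.2 (hsubset (Finset.mem_coe.1 hy))) (Relation.TransGen.mono ?_ _ _ hT)
      rintro a b ⟨ha, hb, hd⟩
      exact ⟨Finset.mem_coe.2 (hsubset (Finset.mem_coe.1 ha)),
             Finset.mem_coe.2 (hsubset (Finset.mem_coe.1 hb)), hd⟩
    have hacA'' : IsAcyclicOn D' (A' : Set V) := by
      intro y hy hT
      refine hac' y (Finset.mem_coe.2 (hsubset (Finset.mem_coe.1 hy))) (Relation.TransGen.mono ?_ _ _ hT)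
      rintro a b ⟨ha, hb, hd⟩
      exact ⟨Finset.mem_coe.2 (hsubset (Finset.mem_coe.1 ha)),
             Finset.mem_coe.2 (hsubset (Finset.mem_coe.1 hb)), hd⟩
    have hdeg' : ∀ u ∈ A', (A'.filter fun w => D u w).card = (A'.filter fun w => D' u w).card := by
      intro u hu
      have h1 := filter_card_erase_aux A (fun w => D u w) v₀ hv₀A
      have h2 := filter_card_erase_aux A (fun w => D' u w) v₀ hv₀A
      have hiff : D u v₀ ↔ D' u v₀ := (hpair u (hsubset hu)).1
      have hieq : (if D u v₀ then 1 else 0) = (if D' u v₀ then 1 else 0) := by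
        by_cases h : D u v₀
        · rw [if_pos h, if_pos (hiff.1 h)]
        · rw [if_neg h, if_neg (fun h' => h (hiff.2 h'))]
      have := hdeg u (hsubset hu)
      rw [h1, h2, hieq] at this
      exact Nat.add_right_cancel this
    have hrec := ih A' hsub hacA' hacA'' hdeg'
    intro u hu v hv
    by_cases huv : u = v₀
    · subst huv; exact (hpair v hv).2
    by_cases hvv : v = v₀
    · subst hvv; exact (hpair u hu).1
    · exact hrec u (Finset.mem_erase.2 ⟨huv, hu⟩) v (Finset.mem_erase.2 ⟨hvv, hv⟩)

end AuxCombinatorics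

section AuxAnalysis

lemma pow_self_le_exp_pow_factorial_aux :
    ∀ b : ℕ, (b : ℝ) ^ b ≤ (Real.exp 1) ^ b * (b.factorial : ℝ) := by
  intro b
  induction b with
  | zero => simp
  | succ b ih =>
    have hstep : ((b : ℝ) + 1) ^ b ≤ Real.exp 1 * (b : ℝ) ^ b := by
      rcases Nat.eq_zero_or_pos b with rfl | hb
      · have h1 : (1:ℝ) ≤ Real.exp 1 := Real.one_le_exp (by norm_num)
        simpa using h1
      · have hbpos : (0 : ℝ) < b := by exact_mod_cast hb
        have h1 : (b : ℝ) + 1 ≤ (b : ℝ) * Real.exp (1 / b) := by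
          have := Real.add_one_le_exp (1 / (b : ℝ))
          calc (b : ℝ) + 1 = (b : ℝ) * (1 / b + 1) := by field_simp; ring
            _ ≤ (b : ℝ) * Real.exp (1 / b) := by
                exact mul_le_mul_of_nonneg_left this hbpos.le
        calc ((b : ℝ) + 1) ^ b ≤ ((b : ℝ) * Real.exp (1 / b)) ^ b := by
              exact pow_le_pow_left₀ (by positivity) h1 b
          _ = (b : ℝ) ^ b * Real.exp (1 / b) ^ b := by rw [mul_pow]
          _ = (b : ℝ) ^ b * Real.exp 1 := by
              rw [← Real.exp_nat_mul]
              congr 1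
              field_simp
          _ = Real.exp 1 * (b : ℝ) ^ b := by ring
    have hb1 : (0 : ℝ) ≤ (b : ℝ) + 1 := by positivity
    calc ((b + 1 : ℕ) : ℝ) ^ (b + 1) = ((b : ℝ) + 1) * ((b : ℝ) + 1) ^ b := by
          push_cast; ring
      _ ≤ ((b : ℝ) + 1) * (Real.exp 1 * (b : ℝ) ^ b) := by
          exact mul_le_mul_of_nonneg_left hstep hb1
      _ ≤ ((b : ℝ) + 1) * (Real.exp 1 * ((Real.exp 1) ^ b * b.factorial)) := by
          refine mul_le_mul_of_nonneg_left (mul_le_mul_of_nonneg_left ih (Real.exp_pos 1).le) hb1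
      _ = (Real.exp 1) ^ (b + 1) * (((b : ℝ) + 1) * b.factorial) := by ring
      _ = (Real.exp 1) ^ (b + 1) * ((b + 1).factorial : ℝ) := by
          rw [Nat.factorial_succ]; push_cast; ring

lemma prod_deg_bound_aux {V : Type*} (A : Finset V) (deg : V → ℕ) (eA : ℕ) (d : ℝ)
    (hsum : ∑ v ∈ A, (deg v : ℝ) = 2 * eA)
    (hd1 : 0 < d + 1) (hd2 : 2 ≤ (d + 1) * Real.log 2)
    (hdb : d * A.card ≤ 2 * (eA : ℝ)) :
    (∏ v ∈ A, ((deg v : ℝ) + 1)) * ((2 : ℝ) ^ (d / 2 : ℝ)) ^ A.card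
      ≤ 2 ^ eA * (d + 1) ^ A.card := by
  set b := A.card with hb
  set g : V → ℝ := fun v => Real.log (d + 1) + ((deg v : ℝ) - d) / (d + 1) with hg
  have hstep : ∀ v ∈ A, ((deg v : ℝ) + 1) ≤ Real.exp (g v) := by
    intro v _
    have hpos : (0 : ℝ) < ((deg v : ℝ) + 1) / (d + 1) := by positivity
    have hlog := Real.log_le_sub_one_of_pos hpos
    rw [Real.log_div (by positivity) (ne_of_gt hd1)] at hlog
    have heq : ((deg v : ℝ) + 1) / (d + 1) - 1 = ((deg v : ℝ) - d) / (d + 1) := by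
      field_simp
      ring
    rw [heq] at hlog
    have : Real.log ((deg v : ℝ) + 1) ≤ g v := by rw [hg]; dsimp only; linarith
    calc ((deg v : ℝ) + 1) = Real.exp (Real.log ((deg v : ℝ) + 1)) :=
          (Real.exp_log (by positivity)).symm
      _ ≤ Real.exp (g v) := Real.exp_le_exp.2 this
  have hprod : (∏ v ∈ A, ((deg v : ℝ) + 1)) ≤ Real.exp (∑ v ∈ A, g v) := by
    rw [Real.exp_sum]
    exact Finset.prod_le_prod (fun v _ => by positivity) hstep
  have hsumg : ∑ v ∈ A, g v = b * Real.log (d + 1) + (2 * (eA : ℝ) - d * b) / (d + 1) := by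
    rw [hg]
    rw [Finset.sum_add_distrib, Finset.sum_const, ← Finset.sum_div, Finset.sum_sub_distrib,
      hsum, Finset.sum_const, nsmul_eq_mul, nsmul_eq_mul]
    ring
  have hS : 0 ≤ 2 * (eA : ℝ) - d * b := by linarith
  have hkey : (2 * (eA : ℝ) - d * b) / (d + 1) + Real.log 2 * ((d / 2) * b)
      ≤ Real.log 2 * (eA : ℝ) := by
    rw [div_add' _ _ _ (ne_of_gt hd1), div_le_iff₀ hd1]
    nlinarith [mul_le_mul_of_nonneg_left hd2 hS]
  have hexp : Real.exp ((2 * (eA : ℝ) - d * b) / (d + 1)) * ((2 : ℝ) ^ (d / 2 : ℝ)) ^ b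
      ≤ 2 ^ eA := by
    have h1 : ((2 : ℝ) ^ (d / 2 : ℝ)) ^ b = (2 : ℝ) ^ ((d / 2) * b : ℝ) := by
      rw [Real.rpow_mul (by norm_num), Real.rpow_natCast]
    have h2 : (2 : ℝ) ^ eA = (2 : ℝ) ^ ((eA : ℕ) : ℝ) := (Real.rpow_natCast 2 eA).symm
    rw [h1, h2, Real.rpow_def_of_pos (by norm_num), Real.rpow_def_of_pos (by norm_num),
      ← Real.exp_add]
    exact Real.exp_le_exp.2 hkey
  calc (∏ v ∈ A, ((deg v : ℝ) + 1)) * ((2 : ℝ) ^ (d / 2 : ℝ)) ^ b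
      ≤ Real.exp (∑ v ∈ A, g v) * ((2 : ℝ) ^ (d / 2 : ℝ)) ^ b := by
        refine mul_le_mul_of_nonneg_right hprod (by positivity)
    _ = (d + 1) ^ b * (Real.exp ((2 * (eA : ℝ) - d * b) / (d + 1))
          * ((2 : ℝ) ^ (d / 2 : ℝ)) ^ b) := by
        rw [hsumg, Real.exp_add, Real.exp_nat_mul, Real.exp_log hd1]
        ring
    _ ≤ (d + 1) ^ b * 2 ^ eA := by
        refine mul_le_mul_of_nonneg_left hexp (by positivity)
    _ = 2 ^ eA * (d + 1) ^ b := by ring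

end AuxAnalysis

section Main

variable {V : Type*} [Fintype V] [LinearOrder V] (G : SimpleGraph V) [DecidableRel G.Adj]

def Dor (f : V × V → Bool) : V → V → Prop := fun u v =>
  G.Adj u v ∧ (if u < v then f (u, v) = true else f (v, u) = false)

omit [Fintype V] [DecidableRel G.Adj] in
lemma isOrientation_Dor (f : V × V → Bool) : IsOrientation G (Dor G f) := by
  constructor
  · exact fun u v h => h.1
  · intro u v h
    rcases lt_or_gt_of_ne h.ne with hlt | hgt
    · simp only [Dor, if_pos hlt, if_neg (asymm hlt), h, h.symm, true_and]
      cases f (u, v) <;> simp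
    · simp only [Dor, if_neg (asymm hgt), if_pos hgt, h, h.symm, true_and]
      cases f (v, u) <;> simp

def edgesIn (A : Finset V) : Finset (V × V) :=
  (A ×ˢ A).filter fun p => G.Adj p.1 p.2 ∧ p.1 < p.2

def degIn (A : Finset V) (v : V) : ℕ := (A.filter fun u => G.Adj v u).card

omit [Fintype V] in
lemma sum_degIn (A : Finset V) :
    ∑ v ∈ A, degIn G A v = ((A ×ˢ A).filter fun p => G.Adj p.1 p.2).card := by
  rw [Finset.card_eq_sum_card_fiberwise
    (f := Prod.fst) (t := A) (fun p hp => (Finset.mem_product.1 (Finset.mem_filter.1 hp).1).1)]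
  refine Finset.sum_congr rfl fun v hv => ?_
  unfold degIn
  refine (Finset.card_bij (fun p _ => p.2) ?_ ?_ ?_).symm
  · rintro p hp
    simp only [Finset.mem_filter, Finset.mem_product] at hp
    obtain ⟨⟨⟨_, h2⟩, hadj⟩, hfst⟩ := hp
    subst hfst
    exact Finset.mem_filter.2 ⟨h2, hadj⟩
  · rintro p hp q hq hpq
    simp only [Finset.mem_filter] at hp hq
    exact Prod.ext (hp.2.trans hq.2.symm) hpq
  · intro u hu
    simp only [Finset.mem_filter] at hu
    refine ⟨(v, u), ?_, rfl⟩
    simp only [Finset.mem_filter, Finset.mem_product]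
    exact ⟨⟨⟨hv, hu.1⟩, hu.2⟩, trivial⟩

omit [Fintype V] in
lemma pairs_eq_two_mul_edgesIn (A : Finset V) :
    ((A ×ˢ A).filter fun p => G.Adj p.1 p.2).card = 2 * (edgesIn G A).card := by
  classical
  set P := (A ×ˢ A).filter fun p => G.Adj p.1 p.2 with hP
  have hsplit := Finset.card_filter_add_card_filter_not
    (s := P) (p := fun p => p.1 < p.2)
  have h1 : P.filter (fun p => p.1 < p.2) = edgesIn G A := by
    unfold edgesIn
    rw [hP, Finset.filter_filter]
  have h2 : (P.filter (fun p => ¬ p.1 < p.2)).card = (edgesIn G A).card := by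
    refine Finset.card_bij (fun p _ => (p.2, p.1)) ?_ ?_ ?_
    · rintro ⟨a, b⟩ hp
      simp only [hP, Finset.mem_filter, Finset.mem_product, edgesIn] at hp ⊢
      obtain ⟨⟨⟨ha, hb⟩, hadj⟩, hlt⟩ := hp
      exact ⟨⟨hb, ha⟩, hadj.symm, lt_of_le_of_ne (not_lt.1 hlt) (Ne.symm hadj.ne)⟩
    · rintro ⟨a, b⟩ _ ⟨c, e⟩ _ h
      simp only [Prod.mk.injEq] at h
      exact Prod.ext h.2 h.1
    · rintro ⟨a, b⟩ hp
      simp only [edgesIn, Finset.mem_filter, Finset.mem_product] at hp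
      obtain ⟨⟨ha, hb⟩, hadj, hlt⟩ := hp
      refine ⟨(b, a), ?_, rfl⟩
      simp only [hP, Finset.mem_filter, Finset.mem_product]
      exact ⟨⟨⟨hb, ha⟩, hadj.symm⟩, not_lt.2 hlt.le⟩
  rw [h1] at hsplit
  omega

open Classical in
lemma badA_card_le (A : Finset V) :
    ((Finset.univ : Finset (V × V → Bool)).filter
        fun f => IsAcyclicOn (Dor G f) (A : Set V)).card ≤
      (∏ v ∈ A, (degIn G A v + 1)) *
        2 ^ (Fintype.card (V × V) - (edgesIn G A).card) := by
  classical
  set E := edgesIn G A with hE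
  set T₁ : Finset (V → ℕ) :=
    Fintype.piFinset (fun v => Finset.range ((if v ∈ A then degIn G A v else 0) + 1)) with hT₁
  set T₂ : Finset (V × V → Bool) :=
    Fintype.piFinset (fun p => if p ∈ E then ({false} : Finset Bool) else Finset.univ) with hT₂
  have hcard₁ : T₁.card = ∏ v ∈ A, (degIn G A v + 1) := by
    rw [hT₁, Fintype.card_piFinset]
    rw [← Finset.prod_subset (Finset.subset_univ A)
      (fun x _ hx => by simp [hx])]
    refine Finset.prod_congr rfl fun v hv => by simp [hv]
  have hcard₂ : T₂.card = 2 ^ (Fintype.card (V × V) - E.card) := by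
    rw [hT₂, Fintype.card_piFinset]
    have : ∀ p : V × V, (if p ∈ E then ({false} : Finset Bool) else Finset.univ).card
        = if p ∈ E then 1 else 2 := by
      intro p; by_cases hp : p ∈ E <;> simp [hp]
    rw [Finset.prod_congr rfl (fun p _ => this p), Finset.prod_ite]
    have hfilt : Finset.univ.filter (fun p : V × V => ¬ p ∈ E) = Eᶜ := by
      ext p; simp
    rw [Finset.prod_const, Finset.prod_const, one_pow, one_mul, hfilt, Finset.card_compl]
  set Φ : (V × V → Bool) → (V → ℕ) × (V × V → Bool) := fun f =>
    (fun v => if v ∈ A then (A.filter fun u => Dor G f v u).card else 0,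
     fun p => if p ∈ E then false else f p) with hΦ
  have hmaps : ∀ f ∈ (Finset.univ.filter fun f => IsAcyclicOn (Dor G f) (A : Set V)),
      Φ f ∈ T₁ ×ˢ T₂ := by
    intro f _
    refine Finset.mem_product.2 ⟨?_, ?_⟩
    · refine Fintype.mem_piFinset.2 fun v => ?_
      by_cases hv : v ∈ A
      · simp only [hΦ, if_pos hv, hT₁, Finset.mem_range]
        refine Nat.lt_succ_of_le (le_trans (Finset.card_le_card
          (Finset.monotone_filter_right A (fun u _ h => h.1))) ?_)
        simp [degIn, hv]
      · simp [hΦ, hv, hT₁]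
    · refine Fintype.mem_piFinset.2 fun p => ?_
      by_cases hp : p ∈ E <;> simp [hΦ, hp]
  have hinj : Set.InjOn Φ
      ((Finset.univ.filter fun f => IsAcyclicOn (Dor G f) (A : Set V)) : Set (V × V → Bool)) := by
    intro f hf g hg heq
    have hacf : IsAcyclicOn (Dor G f) (A : Set V) :=
      (Finset.mem_filter.1 (Finset.mem_coe.1 hf)).2
    have hacg : IsAcyclicOn (Dor G g) (A : Set V) :=
      (Finset.mem_filter.1 (Finset.mem_coe.1 hg)).2
    have hdeg : ∀ v ∈ A, (A.filter fun u => Dor G f v u).card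
        = (A.filter fun u => Dor G g v u).card := by
      intro v hv
      have := congrFun (congrArg Prod.fst heq) v
      simpa [hΦ, hv] using this
    have hiff := acyclic_determined_aux G.Adj A (Dor G f) (Dor G g)
      (fun u v h => h.1) ((isOrientation_Dor G f).2)
      (fun u v h => h.1) ((isOrientation_Dor G g).2) hacf hacg hdeg
    funext p
    obtain ⟨u, v⟩ := p
    by_cases hp : (u, v) ∈ E
    · have hmem := hp
      rw [hE] at hmem
      simp only [edgesIn, Finset.mem_filter, Finset.mem_product] at hmem
      obtain ⟨⟨hu, hv⟩, hadj, hlt⟩ := hmem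
      have h2 := hiff u hu v hv
      simp only [Dor, if_pos hlt, hadj, true_and] at h2
      cases hfv : f (u, v) <;> cases hgv : g (u, v) <;> simp_all
    · have := congrFun (congrArg Prod.snd heq) (u, v)
      simpa [hΦ, hp] using this
  calc ((Finset.univ : Finset (V × V → Bool)).filter
        fun f => IsAcyclicOn (Dor G f) (A : Set V)).card
      ≤ (T₁ ×ˢ T₂).card := Finset.card_le_card_of_injOn Φ hmaps hinj
    _ = _ := by rw [Finset.card_product, hcard₁, hcard₂]

end Main

/-- **Lemma 2.4.** Suppose `d = 2 log₂(e t²)` and `t ≥ 2(d+1)`. Then there is an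
orientation of `G` such that every `t`-principal vertex-set with average degree
at least `d` contains a directed cycle. (The vertices `v₁, …, v_n` are listed
according to the linear order on `V`; `t`-principal means `t`-principal in `V`.) -/
theorem exists_orientation_principal_dense_cyclic {V : Type*} [Fintype V]
    [LinearOrder V] (G : SimpleGraph V) [DecidableRel G.Adj] (t d : ℝ)
    (hd : d = 2 * Real.logb 2 (Real.exp 1 * t ^ 2)) (ht : 2 * (d + 1) ≤ t) :
    ∃ D : V → V → Prop, IsOrientation G D ∧
      ∀ A : Finset V, IsPrincipalIn t Finset.univ A → d ≤ avgDeg G A →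
        HasDirCycleOn D (A : Set V) := by
  classical
  have hfirstK_card : ∀ (k : ℕ), (firstK (Finset.univ : Finset V) k).card ≤ k := by
    intro k
    refine le_trans (List.toFinset_card_le _) ?_
    simpa using List.length_take_le k _
  by_cases ht1 : 1 ≤ t
  swap
  · -- vacuous case : no t-principal sets at all
    refine ⟨Dor G (fun _ => true), isOrientation_Dor G _, ?_⟩
    intro A hA _
    exfalso
    obtain ⟨hne, hsub⟩ := hA
    have hb : 0 < A.card := Finset.card_pos.2 hne
    have hle : A.card ≤ ⌊t * (A.card : ℝ)⌋₊ :=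
      le_trans (Finset.card_le_card hsub) (hfirstK_card _)
    have hflo : (⌊t * (A.card : ℝ)⌋₊ : ℝ) < A.card := by
      rcases le_or_gt 0 (t * (A.card : ℝ)) with h | h
      · calc (⌊t * (A.card : ℝ)⌋₊ : ℝ) ≤ t * A.card := Nat.floor_le h
          _ < 1 * A.card := by
              refine mul_lt_mul_of_pos_right (lt_of_not_ge ht1) ?_
              exact_mod_cast hb
          _ = A.card := one_mul _
      · rw [Nat.floor_of_nonpos h.le]
        exact_mod_cast hb
    have := lt_of_le_of_lt (by exact_mod_cast hle : (A.card : ℝ) ≤ _) hflo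
    exact lt_irrefl _ this
  · -- main case
    have htpos : (0 : ℝ) < t := lt_of_lt_of_le one_pos ht1
    have het2pos : (0 : ℝ) < Real.exp 1 * t ^ 2 := by positivity
    have hlog2pos : (0 : ℝ) < Real.log 2 := Real.log_pos (by norm_num)
    -- d ≥ 2 / log 2
    have hd_ge : 2 / Real.log 2 ≤ d := by
      have hL : (1 : ℝ) ≤ Real.log (Real.exp 1 * t ^ 2) := by
        rw [Real.log_mul (ne_of_gt (Real.exp_pos 1)) (by positivity), Real.log_exp]
        have h0 : (0 : ℝ) ≤ Real.log (t ^ 2) := Real.log_nonneg (by nlinarith)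
        linarith
      rw [hd, Real.logb]
      rw [show (2 : ℝ) / Real.log 2 = 2 * (1 / Real.log 2) by ring]
      gcongr
    have hd0 : 0 < d := lt_of_lt_of_le (by positivity) hd_ge
    have hd1 : 0 < d + 1 := by linarith
    have hd2 : 2 ≤ (d + 1) * Real.log 2 := by
      have : (2 / Real.log 2 + 1) * Real.log 2 ≤ (d + 1) * Real.log 2 := by
        refine mul_le_mul_of_nonneg_right (by linarith) hlog2pos.le
      have h2 : (2 / Real.log 2 + 1) * Real.log 2 = 2 + Real.log 2 := by
        field_simp
      linarith
    have hpow : (2 : ℝ) ^ (d / 2 : ℝ) = Real.exp 1 * t ^ 2 := by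
      rw [hd]
      rw [show (2 * Real.logb 2 (Real.exp 1 * t ^ 2)) / 2 = Real.logb 2 (Real.exp 1 * t ^ 2) by
        ring]
      exact Real.rpow_logb (by norm_num) (by norm_num) het2pos
    set n := Fintype.card V with hn
    set K := Fintype.card (V × V) with hK
    set r : ℝ := (d + 1) / (Real.exp 1 * t ^ 2) with hr
    have hrpos : 0 ≤ r := by positivity
    set F : Finset (Finset V) := Finset.univ.filter
      (fun A => IsPrincipalIn t Finset.univ A ∧ d ≤ avgDeg G A) with hF
    -- basic facts about members of F
    have hFfacts : ∀ A ∈ F, 2 ≤ A.card ∧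
        d * A.card ≤ 2 * ((edgesIn G A).card : ℝ) := by
      intro A hA
      obtain ⟨-, ⟨hne, hsub⟩, hdegA⟩ := Finset.mem_filter.1 hA
      have hcpos : (0 : ℝ) < A.card := by exact_mod_cast Finset.card_pos.2 hne
      have hpairs : (((A ×ˢ A).filter fun p => G.Adj p.1 p.2).card : ℝ)
          = 2 * ((edgesIn G A).card : ℝ) := by
        rw [pairs_eq_two_mul_edgesIn]; push_cast; ring
      have hdb : d * A.card ≤ 2 * ((edgesIn G A).card : ℝ) := by
        have h := hdegA
        rw [avgDeg, le_div_iff₀ hcpos] at h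
        rw [hpairs] at h
        linarith
      refine ⟨?_, hdb⟩
      by_contra hcon
      push_neg at hcon
      have h1 : A.card = 1 := by
        have := Finset.card_pos.2 hne
        omega
      have hzero : ((A ×ˢ A).filter fun p => G.Adj p.1 p.2) = ∅ := by
        refine Finset.filter_eq_empty_iff.2 ?_
        rintro ⟨a, b⟩ hab
        obtain ⟨ha, hb⟩ := Finset.mem_product.1 hab
        have hab' : a = b := Finset.card_le_one.1 (le_of_eq h1) a ha b hb
        rw [hab']
        exact fun hadj => G.irrefl hadj
      rw [avgDeg, hzero] at hdegA
      simp at hdegA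
      linarith
    -- Step 1 : bound each bad count
    have hstep1 : ∀ A ∈ F,
        (((Finset.univ : Finset (V × V → Bool)).filter
          fun f => IsAcyclicOn (Dor G f) (A : Set V)).card : ℝ)
          ≤ (2 : ℝ) ^ K * r ^ A.card := by
      intro A hA
      obtain ⟨hcard2, hdb⟩ := hFfacts A hA
      set eA := (edgesIn G A).card with heA
      have hEle : eA ≤ K := by
        rw [hK]
        exact le_trans (Finset.card_le_univ _) (le_of_eq (Finset.card_univ))
      have hsum : ∑ v ∈ A, ((degIn G A v : ℕ) : ℝ) = 2 * (eA : ℝ) := by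
        have h1 : ∑ v ∈ A, degIn G A v = 2 * eA := by
          rw [sum_degIn, pairs_eq_two_mul_edgesIn]
        exact_mod_cast congrArg (fun x : ℕ => (x : ℝ)) h1
      have hmain := prod_deg_bound_aux A (degIn G A) eA d hsum hd1 hd2 hdb
      rw [hpow] at hmain
      have het2b : (0 : ℝ) < (Real.exp 1 * t ^ 2) ^ A.card := by positivity
      have hprodle : ((∏ v ∈ A, (degIn G A v + 1) : ℕ) : ℝ)
          ≤ 2 ^ eA * (d + 1) ^ A.card / (Real.exp 1 * t ^ 2) ^ A.card := by
        rw [le_div_iff₀ het2b]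
        push_cast
        exact hmain
      have hcast := badA_card_le G A
      have hc2 : (((Finset.univ : Finset (V × V → Bool)).filter
          fun f => IsAcyclicOn (Dor G f) (A : Set V)).card : ℝ)
          ≤ ((∏ v ∈ A, (degIn G A v + 1) : ℕ) : ℝ) * (2 : ℝ) ^ (K - eA) := by
        exact_mod_cast hcast
      have hpow_sub : (2 : ℝ) ^ (K - eA) = 2 ^ K / 2 ^ eA := by
        rw [eq_div_iff (by positivity), ← pow_add, Nat.sub_add_cancel hEle]
      calc (((Finset.univ : Finset (V × V → Bool)).filter
          fun f => IsAcyclicOn (Dor G f) (A : Set V)).card : ℝ)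
          ≤ ((∏ v ∈ A, (degIn G A v + 1) : ℕ) : ℝ) * (2 : ℝ) ^ (K - eA) := hc2
        _ ≤ (2 ^ eA * (d + 1) ^ A.card / (Real.exp 1 * t ^ 2) ^ A.card)
              * (2 : ℝ) ^ (K - eA) := by
            refine mul_le_mul_of_nonneg_right hprodle (by positivity)
        _ = (2 : ℝ) ^ K * r ^ A.card := by
            rw [hpow_sub, hr, div_pow]
            field_simp
    -- Step 2 : the weighted count of principal dense sets is at most 1/2
    have hstep2 : ∑ A ∈ F, r ^ A.card ≤ 1 / 2 := by
      have hmaps : ∀ A ∈ F, A.card ∈ Finset.range (n + 1) := by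
        intro A _
        rw [Finset.mem_range, Nat.lt_succ_iff, hn]
        exact Finset.card_le_univ A
      rw [← Finset.sum_fiberwise_of_maps_to hmaps]
      have hterm : ∀ b ∈ Finset.range (n + 1),
          ∑ A ∈ F.filter (fun A => A.card = b), r ^ A.card
            ≤ (if 2 ≤ b then (1 / 2 : ℝ) ^ b else 0) := by
        intro b _
        have hsum_eq : ∑ A ∈ F.filter (fun A => A.card = b), r ^ A.card
            = ((F.filter (fun A => A.card = b)).card : ℝ) * r ^ b := by
          rw [Finset.sum_congr rfl (fun A hA => by
            rw [(Finset.mem_filter.1 hA).2]), Finset.sum_const, nsmul_eq_mul]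
        by_cases hb2 : 2 ≤ b
        · rw [if_pos hb2, hsum_eq]
          -- count the principal sets of size b
          have hcnt : (F.filter (fun A => A.card = b)).card
              ≤ (⌊t * (b : ℝ)⌋₊).choose b := by
            have hsubset : F.filter (fun A => A.card = b)
                ⊆ (firstK (Finset.univ : Finset V) ⌊t * (b : ℝ)⌋₊).powersetCard b := by
              intro A hA
              obtain ⟨hAF, hAb⟩ := Finset.mem_filter.1 hA
              obtain ⟨-, ⟨hne, hsub⟩, -⟩ := Finset.mem_filter.1 hAF
              rw [Finset.mem_powersetCard]
              constructor
              · rw [← hAb]; exact hsub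
              · exact hAb
            refine le_trans (Finset.card_le_card hsubset) ?_
            rw [Finset.card_powersetCard]
            exact Nat.choose_le_choose b (hfirstK_card _)
          have hbpos : (0 : ℝ) < b := by
            have : (0 : ℕ) < b := by omega
            exact_mod_cast this
          have hfactpos : (0 : ℝ) < (b.factorial : ℝ) := by
            exact_mod_cast b.factorial_pos
          -- (choose) ≤ (t b)^b / b!  and  b^b ≤ e^b b!
          have hchoose : ((⌊t * (b : ℝ)⌋₊).choose b : ℝ)
              ≤ (t * b) ^ b / (b.factorial : ℝ) := by
            refine le_trans (Nat.choose_le_pow_div b ⌊t * (b : ℝ)⌋₊) ?_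
            have hfl : ((⌊t * (b : ℝ)⌋₊ : ℕ) : ℝ) ≤ t * b :=
              Nat.floor_le (by positivity)
            rw [div_le_div_iff_of_pos_right hfactpos]
            exact pow_le_pow_left₀ (by positivity) hfl b
          have her : t * Real.exp 1 * r ≤ 1 / 2 := by
            rw [hr]
            rw [show t * Real.exp 1 * ((d + 1) / (Real.exp 1 * t ^ 2)) = (d + 1) / t by
              field_simp]
            rw [div_le_iff₀ htpos]
            linarith
          have herpos : (0 : ℝ) ≤ t * Real.exp 1 * r := by positivity
          have hfact := pow_self_le_exp_pow_factorial_aux b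
          have hkey : (t * b) ^ b * r ^ b ≤ (1 / 2 : ℝ) ^ b * (b.factorial : ℝ) := by
            calc (t * b) ^ b * r ^ b = t ^ b * ((b : ℝ) ^ b) * r ^ b := by
                  rw [mul_pow]
              _ ≤ t ^ b * ((Real.exp 1) ^ b * (b.factorial : ℝ)) * r ^ b := by
                  refine mul_le_mul_of_nonneg_right
                    (mul_le_mul_of_nonneg_left hfact (by positivity)) (by positivity)
              _ = (t * Real.exp 1 * r) ^ b * (b.factorial : ℝ) := by
                  rw [mul_pow, mul_pow]; ring
              _ ≤ (1 / 2 : ℝ) ^ b * (b.factorial : ℝ) := by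
                  refine mul_le_mul_of_nonneg_right
                    (pow_le_pow_left₀ herpos her b) (by positivity)
          calc ((F.filter (fun A => A.card = b)).card : ℝ) * r ^ b
              ≤ ((t * b) ^ b / (b.factorial : ℝ)) * r ^ b := by
                refine mul_le_mul_of_nonneg_right ?_ (by positivity)
                exact le_trans (by exact_mod_cast hcnt) hchoose
            _ = (t * b) ^ b * r ^ b / (b.factorial : ℝ) := by ring
            _ ≤ ((1 / 2 : ℝ) ^ b * (b.factorial : ℝ)) / (b.factorial : ℝ) :=
                (div_le_div_iff_of_pos_right hfactpos).2 hkey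
            _ = (1 / 2 : ℝ) ^ b := by field_simp
        · rw [if_neg hb2, hsum_eq]
          have : (F.filter (fun A => A.card = b)).card = 0 := by
            rw [Finset.card_eq_zero]
            refine Finset.filter_eq_empty_iff.2 ?_
            intro A hA hAb
            have := (hFfacts A hA).1
            omega
          rw [this]
          simp
      refine le_trans (Finset.sum_le_sum hterm) ?_
      -- geometric tail sum
      have hgeo : ∑ b ∈ Finset.range (n + 1), (if 2 ≤ b then (1 / 2 : ℝ) ^ b else 0)
          = ∑ b ∈ Finset.Ico 2 (n + 1), (1 / 2 : ℝ) ^ b := by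
        rw [← Finset.sum_filter]
        congr 1
        ext x
        simp only [Finset.mem_filter, Finset.mem_range, Finset.mem_Ico, Nat.lt_succ_iff]
        omega
      rw [hgeo]
      rcases le_or_gt 2 (n + 1) with h2n | h2n
      · rw [geom_sum_Ico' (by norm_num : (1 / 2 : ℝ) ≠ 1) h2n]
        have hx : (0 : ℝ) ≤ (1 / 2 : ℝ) ^ (n + 1) := by positivity
        rw [div_le_iff₀ (by norm_num : (0 : ℝ) < 1 - 1 / 2)]
        nlinarith [hx]
      · rw [Finset.Ico_eq_empty (by omega)]
        norm_num
    -- Step 3 : pick a good orientation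
    set Bad : Finset (V × V → Bool) := F.biUnion
      (fun A => Finset.univ.filter fun f => IsAcyclicOn (Dor G f) (A : Set V)) with hBad
    have hcardfun : Fintype.card (V × V → Bool) = 2 ^ K := by
      rw [Fintype.card_fun, Fintype.card_bool, hK]
    have hBadlt : Bad.card < Fintype.card (V × V → Bool) := by
      have h1 : (Bad.card : ℝ) ≤ ∑ A ∈ F, (((Finset.univ : Finset (V × V → Bool)).filter
          fun f => IsAcyclicOn (Dor G f) (A : Set V)).card : ℝ) := by
        have := Finset.card_biUnion_le (s := F)
          (t := fun A => Finset.univ.filter fun f => IsAcyclicOn (Dor G f) (A : Set V))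
        exact_mod_cast this
      have h2 : ∑ A ∈ F, (((Finset.univ : Finset (V × V → Bool)).filter
          fun f => IsAcyclicOn (Dor G f) (A : Set V)).card : ℝ)
          ≤ ∑ A ∈ F, (2 : ℝ) ^ K * r ^ A.card := Finset.sum_le_sum hstep1
      have h3 : ∑ A ∈ F, (2 : ℝ) ^ K * r ^ A.card = (2 : ℝ) ^ K * ∑ A ∈ F, r ^ A.card := by
        rw [Finset.mul_sum]
      have h4 : (2 : ℝ) ^ K * ∑ A ∈ F, r ^ A.card ≤ (2 : ℝ) ^ K * (1 / 2) := by
        refine mul_le_mul_of_nonneg_left hstep2 (by positivity)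
      have h5 : (Bad.card : ℝ) < (2 : ℝ) ^ K := by
        have : (2 : ℝ) ^ K * (1 / 2) < (2 : ℝ) ^ K := by
          nlinarith [pow_pos (by norm_num : (0 : ℝ) < 2) K]
        calc (Bad.card : ℝ) ≤ _ := h1
          _ ≤ _ := h2
          _ = _ := h3
          _ ≤ _ := h4
          _ < _ := this
      rw [hcardfun]
      exact_mod_cast h5
    have hex : ∃ f : V × V → Bool, f ∉ Bad := by
      by_contra hcon
      push_neg at hcon
      have hsub : (Finset.univ : Finset (V × V → Bool)) ⊆ Bad := fun f _ => hcon f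
      have := Finset.card_le_card hsub
      rw [Finset.card_univ] at this
      omega
    obtain ⟨f, hf⟩ := hex
    refine ⟨Dor G f, isOrientation_Dor G f, ?_⟩
    intro A hprin hdegA
    have hAF : A ∈ F := by
      rw [hF]
      exact Finset.mem_filter.2 ⟨Finset.mem_univ _, hprin, hdegA⟩
    have hnotac : ¬ IsAcyclicOn (Dor G f) (A : Set V) := by
      intro hac
      exact hf (Finset.mem_biUnion.2 ⟨A, hAF,
        Finset.mem_filter.2 ⟨Finset.mem_univ _, hac⟩⟩)
    rw [IsAcyclicOn] at hnotac
    push_neg at hnotac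
    obtain ⟨x, hx, hT⟩ := hnotac
    exact ⟨x, hx, hT⟩
end

section
/- Let G be a finite simple graph on n vertices with at least one edge, and let α = log₂(d̄(G) + 1) / d̄(G), where d̄(G) = 2e(G)/n is the average degree of G. Then the number of acyclic orientations of G is at most (d̄(G)+1)^n = 2^{2α·e(G)}; equivalently, the proportion of the 2^{e(G)} orientations of G that are acyclic is at most 2^{-e(G)(1-2α)}. -/
open Finset

open Classical in
lemma key_no_diff {V : Type*} [Fintype V] [DecidableEq V]
    (G : SimpleGraph V) [DecidableRel G.Adj] (D1 D2 : V → V → Bool)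
    (h1 : IsOrientation G (fun u v => D1 u v = true))
    (h2 : IsOrientation G (fun u v => D2 u v = true))
    (ha : IsAcyclicOn (fun u v => D1 u v = true) Set.univ)
    (hdeg : ∀ v, (univ.filter fun w => D1 v w = true).card
      = (univ.filter fun w => D2 v w = true).card)
    (a b : V) (hab : D1 a b = true ∧ D2 a b = false) : False := by
  set F : V → V → Prop := fun x y => D1 x y = true ∧ D2 x y = false with hF
  have step : ∀ x y, F x y → ∃ z, F y z := by
    rintro x y ⟨hxy1, hxy2⟩
    have hadj : G.Adj x y := h1.1 x y hxy1
    have h2yx : D2 y x = true := by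
      by_contra hc
      have : ¬ D2 y x = true := hc
      have := (h2.2 x y hadj).mpr (by simpa using this)
      simp [hxy2] at this
    have h1yx : D1 y x ≠ true := fun hc => ((h1.2 x y hadj).mp hxy1) hc
    by_contra hno
    push_neg at hno
    have hsub : (univ.filter fun w => D1 y w = true) ⊆ (univ.filter fun w => D2 y w = true) := by
      intro z hz
      simp only [mem_filter, mem_univ, true_and] at hz ⊢
      by_contra hc
      exact hno z ⟨hz, by simpa using hc⟩
    have heq := Finset.eq_of_subset_of_card_le hsub (le_of_eq (hdeg y).symm)
    have hx2 : x ∈ (univ.filter fun w => D2 y w = true) := by simp [h2yx]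
    rw [← heq] at hx2
    simp only [mem_filter, mem_univ, true_and] at hx2
    exact h1yx hx2
  -- build an infinite D1-path
  let S := {p : V × V // F p.1 p.2}
  have s0 : S := ⟨(a, b), ⟨hab.1, hab.2⟩⟩
  let next : S → S := fun p => ⟨(p.1.2, Classical.choose (step p.1.1 p.1.2 p.2)),
    Classical.choose_spec (step p.1.1 p.1.2 p.2)⟩
  let f : ℕ → S := fun n => next^[n] s0
  let v : ℕ → V := fun n => (f n).1.1
  have hstep : ∀ n, D1 (v n) (v (n + 1)) = true := by
    intro n
    have h1 : f (n+1) = next (f n) := Function.iterate_succ_apply' next n s0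
    have h2 : v (n+1) = (f n).1.2 := by rw [show v (n+1) = (f (n+1)).1.1 from rfl, h1]
    rw [h2]
    exact (f n).2.1
  have chain : ∀ j i, i < j → Relation.TransGen (fun x y => D1 x y = true) (v i) (v j) := by
    intro j
    induction j with
    | zero => omega
    | succ j ih =>
      intro i hi
      rcases Nat.lt_succ_iff_lt_or_eq.mp hi with h | h
      · exact (ih i h).tail (hstep j)
      · rw [h]; exact Relation.TransGen.single (hstep j)
  obtain ⟨i, j, hne, hij⟩ := Finite.exists_ne_map_eq_of_infinite v
  rcases hne.lt_or_gt with h | h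
  · have t := Relation.TransGen.mono
      (fun x y hxy => show x ∈ Set.univ ∧ y ∈ Set.univ ∧ D1 x y = true from ⟨trivial, trivial, hxy⟩) _ _ (chain j i h)
    rw [hij] at t
    exact ha (v j) trivial t
  · have t := Relation.TransGen.mono
      (fun x y hxy => show x ∈ Set.univ ∧ y ∈ Set.univ ∧ D1 x y = true from ⟨trivial, trivial, hxy⟩) _ _ (chain i j h)
    rw [← hij] at t
    exact ha (v i) trivial t

open Classical in
lemma count_aux {V : Type*} [Fintype V] [DecidableEq V]
    (G : SimpleGraph V) [DecidableRel G.Adj] :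
    (Finset.univ.filter fun D : V → V → Bool =>
        IsOrientation G (fun u v => D u v = true) ∧
        IsAcyclicOn (fun u v => D u v = true) Set.univ).card
      ≤ ∏ v : V, (G.degree v + 1) := by
  have h := Finset.card_le_card_of_injOn
    (f := fun (D : V → V → Bool) (v : V) => (univ.filter fun w => D v w = true).card)
    (s := Finset.univ.filter fun D : V → V → Bool =>
        IsOrientation G (fun u v => D u v = true) ∧
        IsAcyclicOn (fun u v => D u v = true) Set.univ)
    (t := Fintype.piFinset fun v => Finset.range (G.degree v + 1))
    (by
      intro D hD
      simp only [coe_filter, Set.mem_setOf_eq, mem_filter, mem_univ, true_and, mem_coe] at hD ⊢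
      rw [Fintype.mem_piFinset]
      intro v
      rw [Finset.mem_range, Nat.lt_succ_iff, ← G.card_neighborFinset_eq_degree]
      apply Finset.card_le_card
      intro w hw
      simp only [mem_filter, mem_univ, true_and] at hw
      exact (SimpleGraph.mem_neighborFinset G v w).mpr (hD.1.1 v w hw))
    (by
      intro D1 hD1 D2 hD2 heq
      simp only [coe_filter, Set.mem_setOf_eq, mem_univ, true_and] at hD1 hD2
      have hdeg : ∀ v, (univ.filter fun w => D1 v w = true).card
          = (univ.filter fun w => D2 v w = true).card := fun v => congrFun heq v
      funext u w
      by_contra hne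
      rcases Bool.eq_false_or_eq_true (D1 u w) with h1 | h1 <;>
        rcases Bool.eq_false_or_eq_true (D2 u w) with h2 | h2
      · exact hne (h1.trans h2.symm)
      · exact key_no_diff G D1 D2 hD1.1 hD2.1 hD1.2 hdeg u w ⟨h1, h2⟩
      · exact key_no_diff G D2 D1 hD2.1 hD1.1 hD2.2
          (fun v => (hdeg v).symm) u w ⟨h2, h1⟩
      · exact hne (h1.trans h2.symm))
  calc _ ≤ (Fintype.piFinset fun v : V => Finset.range (G.degree v + 1)).card := h
    _ = ∏ v : V, (G.degree v + 1) := by simp [Fintype.card_piFinset]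


open Classical in
/-- **Corollary 2.7.** Let `G` have `n` vertices, at least one edge, average
degree `d̄ = 2e(G)/n`, and let `α = log₂(d̄+1)/d̄`. Then the number of acyclic
orientations of `G` is at most `(d̄+1)^n = 2^{2α·e(G)}`; equivalently, the
proportion of the `2^{e(G)}` orientations that are acyclic is at most
`2^{-e(G)(1-2α)}`. -/
theorem card_acyclic_orientations_le_rpow {V : Type*} [Fintype V] [DecidableEq V]
    (G : SimpleGraph V) [DecidableRel G.Adj]
    (hE : 1 ≤ G.edgeFinset.card) (dbar α : ℝ)
    (hdbar : dbar = 2 * (G.edgeFinset.card : ℝ) / (Fintype.card V : ℝ))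
    (hα : α = Real.logb 2 (dbar + 1) / dbar) :
    ((Finset.univ.filter fun D : V → V → Bool =>
        IsOrientation G (fun u v => D u v = true) ∧
        IsAcyclicOn (fun u v => D u v = true) Set.univ).card : ℝ)
      ≤ (dbar + 1) ^ (Fintype.card V) ∧
    (dbar + 1) ^ (Fintype.card V)
      = (2 : ℝ) ^ (2 * α * (G.edgeFinset.card : ℝ)) ∧
    ((Finset.univ.filter fun D : V → V → Bool =>
        IsOrientation G (fun u v => D u v = true) ∧
        IsAcyclicOn (fun u v => D u v = true) Set.univ).card : ℝ)
        / 2 ^ G.edgeFinset.card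
      ≤ (2 : ℝ) ^ (-((G.edgeFinset.card : ℝ) * (1 - 2 * α))) := by
  have hVne : Nonempty V := by
    obtain ⟨e, he⟩ := Finset.card_pos.mp hE
    induction e using Sym2.ind with
    | _ x y => exact ⟨x⟩
  set n := Fintype.card V with hn
  have hnpos : 0 < n := Fintype.card_pos
  have hnR : (0:ℝ) < (n:ℝ) := by exact_mod_cast hnpos
  have heR : (1:ℝ) ≤ (G.edgeFinset.card : ℝ) := by exact_mod_cast hE
  have hdpos : 0 < dbar := by
    rw [hdbar]; positivity
  have hd1pos : (0:ℝ) < dbar + 1 := by linarith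
  have hdegsum : (∑ v : V, (G.degree v : ℝ)) = 2 * (G.edgeFinset.card : ℝ) := by
    exact_mod_cast congrArg (Nat.cast : ℕ → ℝ) G.sum_degrees_eq_twice_card_edges
  -- AM-GM
  have hsum : ∑ v : V, (1 / (n:ℝ)) * ((G.degree v : ℝ) + 1) = dbar + 1 := by
    rw [← Finset.mul_sum, Finset.sum_add_distrib, hdegsum, Finset.sum_const, card_univ,
      ← hn, hdbar]
    field_simp
    simp [nsmul_eq_mul]
  have hgm : ∏ v : V, ((G.degree v : ℝ) + 1) ^ ((1:ℝ)/(n:ℝ)) ≤ dbar + 1 := by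
    calc ∏ v : V, ((G.degree v : ℝ) + 1) ^ ((1:ℝ)/(n:ℝ))
        ≤ ∑ v : V, (1 / (n:ℝ)) * ((G.degree v : ℝ) + 1) :=
          Real.geom_mean_le_arith_mean_weighted univ _ _
            (fun i _ => by positivity)
            (by rw [Finset.sum_const, card_univ, ← hn, nsmul_eq_mul]; field_simp)
            (fun i _ => by positivity)
      _ = dbar + 1 := hsum
  have hprod : ∏ v : V, ((G.degree v : ℝ) + 1) ≤ (dbar + 1) ^ n := by
    have hrw : ∏ v : V, ((G.degree v : ℝ) + 1)
        = (∏ v : V, ((G.degree v : ℝ) + 1) ^ ((1:ℝ)/(n:ℝ))) ^ n := by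
      rw [← Finset.prod_pow]
      apply Finset.prod_congr rfl
      intro v _
      rw [← Real.rpow_natCast (((G.degree v : ℝ) + 1) ^ ((1:ℝ)/(n:ℝ))) n,
        ← Real.rpow_mul (by positivity), one_div, inv_mul_cancel₀ hnR.ne', Real.rpow_one]
    rw [hrw]
    exact pow_le_pow_left₀ (Finset.prod_nonneg fun i _ => by positivity) hgm n
  have part1 : ((Finset.univ.filter fun D : V → V → Bool =>
        IsOrientation G (fun u v => D u v = true) ∧
        IsAcyclicOn (fun u v => D u v = true) Set.univ).card : ℝ)
      ≤ (dbar + 1) ^ n := by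
    refine le_trans ?_ hprod
    have := count_aux G
    calc ((Finset.univ.filter fun D : V → V → Bool =>
        IsOrientation G (fun u v => D u v = true) ∧
        IsAcyclicOn (fun u v => D u v = true) Set.univ).card : ℝ)
        ≤ ((∏ v : V, (G.degree v + 1) : ℕ) : ℝ) := by exact_mod_cast this
      _ = ∏ v : V, ((G.degree v : ℝ) + 1) := by push_cast; ring
  have hkey : dbar * n = 2 * (G.edgeFinset.card : ℝ) := by
    rw [hdbar]; field_simp
  have hαe : 2 * α * (G.edgeFinset.card : ℝ) = Real.logb 2 (dbar + 1) * n := by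
    rw [hα]
    have h2 : (2:ℝ) * (Real.logb 2 (dbar + 1) / dbar) * (G.edgeFinset.card : ℝ)
        = Real.logb 2 (dbar + 1) * ((n:ℝ) * dbar) / dbar := by
      rw [show ((n:ℝ) * dbar) = 2 * (G.edgeFinset.card : ℝ) from by linarith [hkey]]
      ring
    rw [h2, ← mul_assoc, mul_div_assoc, div_self hdpos.ne', mul_one]
  have part2 : (dbar + 1) ^ n = (2 : ℝ) ^ (2 * α * (G.edgeFinset.card : ℝ)) := by
    rw [hαe, Real.rpow_mul (by norm_num : (0:ℝ) ≤ 2),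
      Real.rpow_logb (by norm_num) (by norm_num) hd1pos, Real.rpow_natCast]
  refine ⟨part1, part2, ?_⟩
  have h2epos : (0:ℝ) < 2 ^ G.edgeFinset.card := by positivity
  have step1 : ((Finset.univ.filter fun D : V → V → Bool =>
        IsOrientation G (fun u v => D u v = true) ∧
        IsAcyclicOn (fun u v => D u v = true) Set.univ).card : ℝ)
        / 2 ^ G.edgeFinset.card
      ≤ (2 : ℝ) ^ (2 * α * (G.edgeFinset.card : ℝ)) / 2 ^ G.edgeFinset.card := by
    gcongr
    rw [← part2]; exact part1
  refine step1.trans_eq ?_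
  rw [show ((2:ℝ) ^ G.edgeFinset.card) = (2:ℝ) ^ ((G.edgeFinset.card : ℝ)) from
    (Real.rpow_natCast 2 _).symm, ← Real.rpow_sub (by norm_num)]
  congr 1
  ring
end

section
/- Let k be a positive integer, let H be a simple graph with chromatic number χ(H) > k, and let m be a positive integer. If there is an orientation D of the blow-up H^(m) such that within the blow-up of every edge of H, no subgraph isomorphic to the complete bipartite graph K_{⌈m/k⌉, ⌈m/k⌉} (with ⌈m/k⌉ vertices on each side of the corresponding complete bipartite blow-up) is acyclic, then the chromatic number of the digraph D is greater than k. -/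
/-- The chromatic number of a digraph `D`: the minimum number of acyclic
vertex-sets whose union is the whole vertex set. -/
noncomputable def digraphChrom {V : Type*} (D : V → V → Prop) : ℕ :=
  sInf {k : ℕ | ∃ f : V → Fin k, ∀ i : Fin k, IsAcyclicOn D {v | f v = i}}

/-- The dichromatic number of an undirected graph: the maximum chromatic number
over all orientations of its edges. -/
noncomputable def dichromatic {V : Type*} (G : SimpleGraph V) : ℕ :=
  sSup {k : ℕ | ∃ D : V → V → Prop, IsOrientation G D ∧ k = digraphChrom D}

/-- The blow-up of a simple graph `H` with power `m`: each vertex is replaced by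
an independent set of size `m`, each edge by a complete bipartite graph `K_{m,m}`. -/
def blowup {α : Type*} (H : SimpleGraph α) (m : ℕ) : SimpleGraph (α × Fin m) where
  Adj a b := H.Adj a.1 b.1
  symm := ⟨fun _ _ h => h.symm⟩
  loopless := ⟨fun a h => H.loopless.irrefl a.1 h⟩

/-- **Lemma 3.1.** Let `χ(H) > k` and let `D` be an orientation of the blow-up
`H^(m)` such that in the blow-up of any edge of `H`, no copy of
`K_{⌈m/k⌉,⌈m/k⌉}` (given by choosing `⌈m/k⌉` vertices in each side) is acyclic.
Then the chromatic number of the digraph `D` is greater than `k`. -/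
theorem digraphChrom_blowup_gt {α : Type*} [Fintype α] [DecidableEq α]
    (k m : ℕ) (hk : 0 < k) (hm : 0 < m) (H : SimpleGraph α)
    (hH : (k : ℕ∞) < H.chromaticNumber)
    (D : α × Fin m → α × Fin m → Prop) (hD : IsOrientation (blowup H m) D)
    (hcyc : ∀ x y : α, H.Adj x y → ∀ S T : Finset (Fin m),
      S.card = ⌈(m : ℝ) / (k : ℝ)⌉₊ → T.card = ⌈(m : ℝ) / (k : ℝ)⌉₊ →
      HasDirCycleOn D {p : α × Fin m | (p.1 = x ∧ p.2 ∈ S) ∨ (p.1 = y ∧ p.2 ∈ T)}) :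
    k < digraphChrom D := by
  classical
  by_contra hle
  push_neg at hle
  set t := ⌈(m : ℝ) / (k : ℝ)⌉₊ with htdef
  have ht1 : 1 ≤ t := by
    rw [htdef, Nat.one_le_ceil_iff]
    positivity
  -- the set defining digraphChrom is nonempty
  have hSne : {n : ℕ | ∃ f : (α × Fin m) → Fin n,
      ∀ i : Fin n, IsAcyclicOn D {v | f v = i}}.Nonempty := by
    refine ⟨Fintype.card (α × Fin m), Fintype.equivFin _, ?_⟩
    intro i x hx hT
    have hr : ∀ a b : α × Fin m,
        (a ∈ {v | Fintype.equivFin (α × Fin m) v = i} ∧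
         b ∈ {v | Fintype.equivFin (α × Fin m) v = i} ∧ D a b) → False := by
      rintro a b ⟨ha, hb, hab⟩
      have hab' : a = b := (Fintype.equivFin (α × Fin m)).injective
        (by simpa using ha.trans hb.symm)
      subst hab'
      exact (blowup H m).loopless.irrefl a (hD.1 a a hab)
    cases hT with
    | single h => exact hr _ _ h
    | tail _ h => exact hr _ _ h
  set n := digraphChrom D with hndef
  have hn : n ∈ {n : ℕ | ∃ f : (α × Fin m) → Fin n,
      ∀ i : Fin n, IsAcyclicOn D {v | f v = i}} := Nat.sInf_mem hSne
  obtain ⟨f, hf⟩ := hn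
  have hnk : n ≤ k := hle
  -- pigeonhole: for each x, some color appears on at least t copies
  have key : ∀ x : α, ∃ i : Fin n, ∃ Sx : Finset (Fin m),
      Sx.card = t ∧ ∀ j ∈ Sx, f (x, j) = i := by
    intro x
    have hnpos : 0 < n := by
      rcases Fin.pos_iff_nonempty.mp hm with ⟨j⟩
      exact Fin.pos_iff_nonempty.mpr ⟨f (x, j)⟩
    have hsum : ∑ i : Fin n, (Finset.univ.filter (fun j : Fin m => f (x, j) = i)).card
        = m := by
      rw [← Finset.card_eq_sum_card_fiberwise (f := fun j : Fin m => f (x, j))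
        (fun j _ => Finset.mem_univ _)]
      simp
    by_contra hcon
    push_neg at hcon
    have hlt : ∀ i : Fin n,
        (Finset.univ.filter (fun j : Fin m => f (x, j) = i)).card ≤ t - 1 := by
      intro i
      by_contra hgt
      push_neg at hgt
      have hge : t ≤ (Finset.univ.filter (fun j : Fin m => f (x, j) = i)).card := by
        omega
      obtain ⟨Sx, hSx, hScard⟩ := Finset.exists_subset_card_eq hge
      obtain ⟨j, hj, hne⟩ := hcon i Sx hScard
      exact hne (Finset.mem_filter.mp (hSx hj)).2
    have hsumle : m ≤ n * (t - 1) := by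
      calc m = ∑ i : Fin n, (Finset.univ.filter (fun j : Fin m => f (x, j) = i)).card :=
            hsum.symm
        _ ≤ ∑ _i : Fin n, (t - 1) := Finset.sum_le_sum (fun i _ => hlt i)
        _ = n * (t - 1) := by simp [Finset.sum_const, mul_comm]
    have hklt : k * (t - 1) < m := by
      have h1 : ((t - 1 : ℕ) : ℝ) < (m : ℝ) / (k : ℝ) := by
        rw [← Nat.lt_ceil]
        omega
      have h2 : ((t - 1 : ℕ) : ℝ) * (k : ℝ) < (m : ℝ) := by
        rw [← lt_div_iff₀ (by exact_mod_cast hk)]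
        exact h1
      have h3 : (t - 1) * k < m := by exact_mod_cast h2
      rw [Nat.mul_comm]
      exact h3
    have hmono : n * (t - 1) ≤ k * (t - 1) := Nat.mul_le_mul_right _ hnk
    have heq : k * (t - 1) = (t - 1) * k := Nat.mul_comm _ _
    linarith
  choose c Sx hcard hcol using key
  -- c is a proper coloring of H
  have hproper : ∀ x y : α, H.Adj x y → c x ≠ c y := by
    intro x y hadj hcc
    obtain ⟨p, hp, hcycp⟩ := hcyc x y hadj (Sx x) (Sx y) (hcard x) (hcard y)
    have hsub : {p : α × Fin m | (p.1 = x ∧ p.2 ∈ Sx x) ∨ (p.1 = y ∧ p.2 ∈ Sx y)}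
        ⊆ {v | f v = c x} := by
      rintro ⟨a, j⟩ (⟨rfl, hj⟩ | ⟨rfl, hj⟩)
      · exact hcol a j hj
      · rw [Set.mem_setOf_eq, hcc]
        exact hcol a j hj
    exact hf (c x) p (hsub hp)
      (Relation.TransGen.mono (fun a b ⟨ha, hb, hd⟩ => ⟨hsub ha, hsub hb, hd⟩) _ _ hcycp)
  have hcolorable : H.Colorable n :=
    ⟨SimpleGraph.Coloring.mk c (fun {x y} h => hproper x y h)⟩
  have hchrom : H.chromaticNumber ≤ (n : ℕ∞) := hcolorable.chromaticNumber_le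
  have : (k : ℕ∞) < (n : ℕ∞) := lt_of_lt_of_le hH hchrom
  have : k < n := by exact_mod_cast this
  omega
end

section
/- Let m, r be positive integers with 2 + 2·log₂(m) ≤ r. Then there exists an orientation of the complete bipartite graph K_{m,m} such that no subgraph isomorphic to K_{r,r} (with r vertices chosen on each side of the bipartition) is acyclic under this orientation. -/
open Finset

lemma succ_pow_lt_aux : ∀ r : ℕ, 1 ≤ r → ((r : ℝ) + 1) ^ r < 4 ^ r * (r.factorial : ℝ) := by
  intro r
  induction r with
  | zero => intro h; omega
  | succ n ih =>
    intro _
    rcases Nat.eq_zero_or_pos n with hn | hn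
    · subst hn; norm_num
    have ih' := ih hn
    have hpos : (0:ℝ) < (n:ℝ) + 1 := by positivity
    have key : ((n:ℝ) + 2) ^ (n+1) ≤ Real.exp 1 * ((n:ℝ) + 1) ^ (n+1) := by
      have h1 : ((n:ℝ) + 2) = (1 + 1/((n:ℝ)+1)) * ((n:ℝ)+1) := by field_simp; ring
      have h2 : (1 + 1/((n:ℝ)+1)) ^ (n+1) ≤ Real.exp 1 := by
        have h3 : (1 + 1/((n:ℝ)+1)) ≤ Real.exp (1/((n:ℝ)+1)) := by
          have := Real.add_one_le_exp (1/((n:ℝ)+1)); linarith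
        calc (1 + 1/((n:ℝ)+1)) ^ (n+1) ≤ (Real.exp (1/((n:ℝ)+1))) ^ (n+1) := by
              apply pow_le_pow_left₀ (by positivity) h3
          _ = Real.exp (((n:ℕ)+1) * (1/((n:ℝ)+1))) := by
              rw [← Real.exp_nat_mul]; norm_num
          _ = Real.exp 1 := by
              congr 1; push_cast; field_simp
      calc ((n:ℝ) + 2) ^ (n+1) = (1 + 1/((n:ℝ)+1)) ^ (n+1) * ((n:ℝ)+1) ^ (n+1) := by
            rw [h1, mul_pow]
        _ ≤ Real.exp 1 * ((n:ℝ)+1) ^ (n+1) := by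
            apply mul_le_mul_of_nonneg_right h2 (by positivity)
    have hexp4 : Real.exp 1 < 4 := by
      have := Real.exp_one_lt_d9; linarith
    have hfac : (0:ℝ) < (n.factorial : ℝ) := by exact_mod_cast n.factorial_pos
    calc ((↑(n+1):ℝ) + 1) ^ (n+1) = ((n:ℝ) + 2) ^ (n+1) := by push_cast; ring_nf
      _ ≤ Real.exp 1 * ((n:ℝ)+1) ^ (n+1) := key
      _ = Real.exp 1 * (((n:ℝ)+1) * ((n:ℝ)+1) ^ n) := by ring
      _ < Real.exp 1 * (((n:ℝ)+1) * (4 ^ n * (n.factorial : ℝ))) := by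
          apply mul_lt_mul_of_pos_left _ (Real.exp_pos 1)
          exact mul_lt_mul_of_pos_left ih' hpos
      _ < 4 * (((n:ℝ)+1) * (4 ^ n * (n.factorial : ℝ))) := by
          apply mul_lt_mul_of_pos_right hexp4 (by positivity)
      _ = 4 ^ (n+1) * (((n:ℝ)+1) * (n.factorial : ℝ)) := by ring
      _ = 4 ^ (n+1) * ((n+1).factorial : ℝ) := by
          rw [Nat.factorial_succ]; push_cast; ring

lemma count_lt (m r : ℕ) (hm : 0 < m) (hr2 : 2 ≤ r)
    (h : 2 + 2 * Real.logb 2 (m : ℝ) ≤ (r : ℝ)) :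
    (m.choose r)^2 * (r.factorial * (r+1)^r) < 2^(r*r) := by
  have hfac : (0:ℝ) < (r.factorial : ℝ) := by exact_mod_cast r.factorial_pos
  have hC : (m.choose r : ℝ) ≤ (m:ℝ)^r / (r.factorial : ℝ) := Nat.choose_le_pow_div r m
  have hCpos : (0:ℝ) ≤ (m.choose r : ℝ) := by positivity
  have hm1 : (1:ℝ) ≤ (m:ℝ) := by exact_mod_cast hm
  -- m ≤ 2 ^ ((r-2)/2)
  have hlogb : Real.logb 2 (m:ℝ) ≤ ((r:ℝ) - 2)/2 := by linarith
  have hm2 : (m:ℝ) ≤ (2:ℝ) ^ (((r:ℝ) - 2)/2) := by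
    rw [← Real.rpow_logb (b := 2) (x := (m:ℝ)) (by norm_num) (by norm_num) (by positivity)]
    exact Real.rpow_le_rpow_of_exponent_le (by norm_num) hlogb
  set N : ℕ := r*r - 2*r with hNdef
  have hN : N + 2*r = r*r := by
    have : 2*r ≤ r*r := by nlinarith
    omega
  have hmm : (m:ℝ)^(2*r) ≤ (2:ℝ)^N := by
    calc (m:ℝ)^(2*r) ≤ ((2:ℝ) ^ (((r:ℝ) - 2)/2))^(2*r) := by
          apply pow_le_pow_left₀ (by positivity) hm2
      _ = (2:ℝ) ^ ((((r:ℝ) - 2)/2) * ((2*r : ℕ) : ℝ)) := by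
          rw [← Real.rpow_natCast ((2:ℝ) ^ (((r:ℝ) - 2)/2)) (2*r), ← Real.rpow_mul (by norm_num)]
      _ = (2:ℝ) ^ ((N : ℕ) : ℝ) := by
          congr 1
          have : ((N:ℕ):ℝ) = (r:ℝ)*(r:ℝ) - 2*(r:ℝ) := by
            rw [hNdef]
            have h2r : 2*r ≤ r*r := by nlinarith
            push_cast [Nat.cast_sub h2r]; ring
          rw [this]; push_cast; ring
      _ = (2:ℝ) ^ (N:ℕ) := by rw [Real.rpow_natCast]
  have hkey : ((r:ℝ) + 1) ^ r < 4 ^ r * (r.factorial : ℝ) := succ_pow_lt_aux r (by omega)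
  have main : ((m.choose r : ℝ))^2 * ((r.factorial : ℝ) * ((r:ℝ)+1)^r) < (2:ℝ)^(r*r) := by
    have step1 : ((m.choose r : ℝ))^2 * ((r.factorial : ℝ) * ((r:ℝ)+1)^r)
        ≤ ((m:ℝ)^r / (r.factorial : ℝ))^2 * ((r.factorial : ℝ) * ((r:ℝ)+1)^r) := by
      apply mul_le_mul_of_nonneg_right _ (by positivity)
      exact pow_le_pow_left₀ hCpos hC 2
    have step2 : ((m:ℝ)^r / (r.factorial : ℝ))^2 * ((r.factorial : ℝ) * ((r:ℝ)+1)^r)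
        = (m:ℝ)^(2*r) * ((r:ℝ)+1)^r / (r.factorial : ℝ) := by
      field_simp; ring
    have step3 : (m:ℝ)^(2*r) * ((r:ℝ)+1)^r / (r.factorial : ℝ) < (2:ℝ)^(r*r) := by
      rw [div_lt_iff₀ hfac]
      calc (m:ℝ)^(2*r) * ((r:ℝ)+1)^r ≤ (2:ℝ)^N * ((r:ℝ)+1)^r := by
            apply mul_le_mul_of_nonneg_right hmm (by positivity)
        _ < (2:ℝ)^N * (4 ^ r * (r.factorial : ℝ)) := by
            apply mul_lt_mul_of_pos_left hkey (by positivity)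
        _ = (2:ℝ)^(r*r) * (r.factorial : ℝ) := by
            rw [← hN, pow_add, (by norm_num : (4:ℝ) = 2^2), ← pow_mul]
            ring
    calc ((m.choose r : ℝ))^2 * ((r.factorial : ℝ) * ((r:ℝ)+1)^r)
        ≤ ((m:ℝ)^r / (r.factorial : ℝ))^2 * ((r.factorial : ℝ) * ((r:ℝ)+1)^r) := step1
      _ = (m:ℝ)^(2*r) * ((r:ℝ)+1)^r / (r.factorial : ℝ) := step2
      _ < (2:ℝ)^(r*r) := step3
  have := main
  exact_mod_cast (by push_cast at this ⊢; exact this : ((m.choose r)^2 * (r.factorial * (r+1)^r) : ℝ) < (2:ℝ)^(r*r))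

def GoodM {m : ℕ} (M : Fin m → Fin m → Bool) (S T : Finset (Fin m)) : Prop :=
  ∃ i ∈ S, ∃ i' ∈ S, ∃ j ∈ T, ∃ j' ∈ T,
    M i j = true ∧ M i' j = false ∧ M i' j' = true ∧ M i j' = false

instance {m : ℕ} (M : Fin m → Fin m → Bool) (S T : Finset (Fin m)) :
    Decidable (GoodM M S T) := by unfold GoodM; infer_instance

def wt {m : ℕ} (M : Fin m → Fin m → Bool) (T : Finset (Fin m)) (i : Fin m) : ℕ :=
  (T.filter (fun j => M i j = true)).card

def ltR {m : ℕ} (M : Fin m → Fin m → Bool) (T : Finset (Fin m)) (i i' : Fin m) : Prop :=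
  wt M T i < wt M T i' ∨ (wt M T i = wt M T i' ∧ i < i')

instance {m : ℕ} (M : Fin m → Fin m → Bool) (T : Finset (Fin m)) (i i' : Fin m) :
    Decidable (ltR M T i i') := by unfold ltR; infer_instance

lemma ltR_irrefl {m : ℕ} (M : Fin m → Fin m → Bool) (T : Finset (Fin m)) (i : Fin m) :
    ¬ ltR M T i i := by
  unfold ltR; simp [Fin.lt_def]

lemma ltR_asymm {m : ℕ} {M : Fin m → Fin m → Bool} {T : Finset (Fin m)} {i i' : Fin m}
    (h : ltR M T i i') : ¬ ltR M T i' i := by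
  unfold ltR at *; simp only [Fin.lt_def] at *; omega

lemma ltR_total {m : ℕ} (M : Fin m → Fin m → Bool) (T : Finset (Fin m)) {i i' : Fin m}
    (hne : i ≠ i') : ltR M T i i' ∨ ltR M T i' i := by
  have : (i : ℕ) ≠ (i' : ℕ) := fun hc => hne (Fin.val_injective hc)
  unfold ltR; simp only [Fin.lt_def]; omega

lemma ltR_trans {m : ℕ} {M : Fin m → Fin m → Bool} {T : Finset (Fin m)} {a b c : Fin m}
    (h1 : ltR M T a b) (h2 : ltR M T b c) : ltR M T a c := by
  unfold ltR at *; simp only [Fin.lt_def] at *; omega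

/-- In a pattern-free configuration, a column where `i` is false and `i'` is true
forces `i` strictly below `i'` in the order. -/
lemma ltR_of_col {m : ℕ} {M : Fin m → Fin m → Bool} {S T : Finset (Fin m)}
    (hbad : ¬ GoodM M S T) {i i' : Fin m} {j : Fin m}
    (hi : i ∈ S) (hi' : i' ∈ S) (hj : j ∈ T)
    (h0 : M i j = false) (h1 : M i' j = true) : ltR M T i i' := by
  left
  apply Finset.card_lt_card
  rw [Finset.ssubset_iff_of_subset]
  · exact ⟨j, by simp [hj, h1], by simp [h0]⟩
  · intro j' hj'
    simp only [Finset.mem_filter] at hj' ⊢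
    refine ⟨hj'.1, ?_⟩
    by_contra hcon
    rw [Bool.not_eq_true] at hcon
    exact hbad ⟨i, hi, i', hi', j', hj'.1, j, hj, hj'.2, hcon, h1, h0⟩

def posR {m : ℕ} (M : Fin m → Fin m → Bool) (S T : Finset (Fin m)) (i : Fin m) : ℕ :=
  (S.filter (fun i' => ltR M T i' i)).card

def colc {m : ℕ} (M : Fin m → Fin m → Bool) (S : Finset (Fin m)) (j : Fin m) : ℕ :=
  (S.filter (fun i => M i j = true)).card

lemma posR_lt {m r : ℕ} (M : Fin m → Fin m → Bool) {S : Finset (Fin m)} (T : Finset (Fin m))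
    {i : Fin m} (hS : S.card = r) (hi : i ∈ S) : posR M S T i < r := by
  have hsub : S.filter (fun i' => ltR M T i' i) ⊆ S.erase i := by
    intro x hx
    simp only [Finset.mem_filter] at hx
    refine Finset.mem_erase.mpr ⟨?_, hx.1⟩
    rintro rfl; exact ltR_irrefl _ _ _ hx.2
  have := Finset.card_le_card hsub
  rw [Finset.card_erase_of_mem hi, hS] at this
  have hr : 1 ≤ r := hS ▸ Finset.card_pos.mpr ⟨i, hi⟩
  unfold posR; omega

lemma posR_strictMono {m : ℕ} (M : Fin m → Fin m → Bool) {S T : Finset (Fin m)}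
    {i i' : Fin m} (hi : i ∈ S) (hlt : ltR M T i i') :
    posR M S T i < posR M S T i' := by
  apply Finset.card_lt_card
  rw [Finset.ssubset_iff_of_subset]
  · exact ⟨i, by simp [hi, hlt], by simp [ltR_irrefl]⟩
  · intro x hx
    simp only [Finset.mem_filter] at hx ⊢
    exact ⟨hx.1, ltR_trans hx.2 hlt⟩

lemma posR_injOn {m : ℕ} (M : Fin m → Fin m → Bool) {S T : Finset (Fin m)}
    {i i' : Fin m} (hi : i ∈ S) (hi' : i' ∈ S) (heq : posR M S T i = posR M S T i') :
    i = i' := by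
  by_contra hne
  rcases ltR_total M T hne with hlt | hlt
  · exact absurd heq (Nat.ne_of_lt (posR_strictMono M hi hlt))
  · exact absurd heq.symm (Nat.ne_of_lt (posR_strictMono M hi' hlt))

/-- Reconstruction: a pattern-free matrix is determined on `S × T` by
row positions and column counts. -/
lemma recon {m r : ℕ} {M : Fin m → Fin m → Bool} {S T : Finset (Fin m)}
    (hbad : ¬ GoodM M S T) (hS : S.card = r) {i j : Fin m}
    (hi : i ∈ S) (hj : j ∈ T) :
    (M i j = true ↔ r ≤ posR M S T i + colc M S j) := by
  have hA : (S.filter (fun i' => ltR M T i' i)).card ≤ r := by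
    rw [← hS]; exact Finset.card_le_card (Finset.filter_subset _ _)
  have hsplit : (S.filter (fun i' => ¬ ltR M T i' i)).card
      = r - (S.filter (fun i' => ltR M T i' i)).card := by
    rw [Finset.filter_not, Finset.card_sdiff_of_subset (Finset.filter_subset _ _), hS]
  constructor
  · intro htrue
    have hsub : S.filter (fun i' => ¬ ltR M T i' i) ⊆ S.filter (fun i' => M i' j = true) := by
      intro x hx
      simp only [Finset.mem_filter] at hx ⊢
      refine ⟨hx.1, ?_⟩
      by_contra hcon
      rw [Bool.not_eq_true] at hcon
      exact hx.2 (ltR_of_col hbad hx.1 hi hj hcon htrue)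
    have h2 := Finset.card_le_card hsub
    rw [hsplit] at h2
    unfold posR colc
    omega
  · intro hge
    by_contra hcon
    rw [Bool.not_eq_true] at hcon
    have hiA : i ∈ S.filter (fun i' => ¬ ltR M T i' i) := by
      simp [hi, ltR_irrefl]
    have hApos : 1 ≤ (S.filter (fun i' => ¬ ltR M T i' i)).card :=
      Finset.card_pos.mpr ⟨i, hiA⟩
    have hsub : S.filter (fun i' => M i' j = true)
        ⊆ (S.filter (fun i' => ¬ ltR M T i' i)).erase i := by
      intro x hx
      simp only [Finset.mem_filter] at hx
      have hlt : ltR M T i x := ltR_of_col hbad hi hx.1 hj hcon hx.2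
      refine Finset.mem_erase.mpr ⟨?_, Finset.mem_filter.mpr ⟨hx.1, ltR_asymm hlt⟩⟩
      rintro rfl; exact ltR_irrefl _ _ _ hlt
    have h1 := Finset.card_le_card hsub
    rw [Finset.card_erase_of_mem hiA, hsplit] at h1
    unfold posR colc at hge
    omega

lemma card_bad_le {m r : ℕ} {S T : Finset (Fin m)} (hS : S.card = r) (hT : T.card = r) :
    ((Finset.univ : Finset (Fin m → Fin m → Bool)).filter (fun M => ¬ GoodM M S T)).card
      ≤ r.factorial * (r+1)^r * 2^(m*m - r*r) := by
  classical
  set β := ((↥S) ↪ Fin r) × ((↥T) → Fin (r+1)) ×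
    ({p : Fin m × Fin m // ¬ (p.1 ∈ S ∧ p.2 ∈ T)} → Bool) with hβ
  have hcard1 : Fintype.card ((↥S) ↪ Fin r) = r.factorial := by
    rw [Fintype.card_embedding_eq, Fintype.card_coe, hS, Fintype.card_fin,
      Nat.descFactorial_self]
  have hcard2 : Fintype.card ((↥T) → Fin (r+1)) = (r+1)^r := by
    rw [Fintype.card_fun, Fintype.card_fin, Fintype.card_coe, hT]
  have hcardin : Fintype.card {p : Fin m × Fin m // p.1 ∈ S ∧ p.2 ∈ T} = r*r := by
    rw [Fintype.card_subtype]
    have : (Finset.univ.filter (fun p : Fin m × Fin m => p.1 ∈ S ∧ p.2 ∈ T)) = S ×ˢ T := by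
      ext p; simp [Finset.mem_product]
    rw [this, Finset.card_product, hS, hT]
  have hcard3 : Fintype.card ({p : Fin m × Fin m // ¬ (p.1 ∈ S ∧ p.2 ∈ T)} → Bool)
      = 2^(m*m - r*r) := by
    rw [Fintype.card_fun, Fintype.card_bool, Fintype.card_subtype_compl, hcardin]
    congr 1
    simp [Fintype.card_prod, Fintype.card_fin]
  have hcardβ : Fintype.card β = r.factorial * (r+1)^r * 2^(m*m - r*r) := by
    rw [Fintype.card_congr (Equiv.cast hβ), Fintype.card_prod, Fintype.card_prod, hcard1, hcard2, hcard3, mul_assoc]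
  -- the encoding map
  have hcolc : ∀ (M : Fin m → Fin m → Bool) (j : Fin m), colc M S j < r + 1 := by
    intro M j
    have := Finset.card_filter_le S (fun i => M i j = true)
    unfold colc; omega
  set F : (Fin m → Fin m → Bool) → β := fun M =>
    (⟨fun i => ⟨posR M S T i.1, posR_lt M T hS i.2⟩,
      fun a b hab => Subtype.ext (posR_injOn M a.2 b.2 (by
        have := congrArg Fin.val hab; simpa using this))⟩,
     fun j => ⟨colc M S j.1, hcolc M j.1⟩,
     fun p => M p.1.1 p.1.2) with hF
  have hinj : Set.InjOn F
      ((Finset.univ : Finset (Fin m → Fin m → Bool)).filter (fun M => ¬ GoodM M S T)) := by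
    intro M1 hM1 M2 hM2 heq
    have hbad1 : ¬ GoodM M1 S T := by
      simpa using (Finset.mem_filter.mp (Finset.mem_coe.mp hM1)).2
    have hbad2 : ¬ GoodM M2 S T := by
      simpa using (Finset.mem_filter.mp (Finset.mem_coe.mp hM2)).2
    funext i j
    by_cases hij : i ∈ S ∧ j ∈ T
    · have hpos : posR M1 S T i = posR M2 S T i := by
        have h1 := congrArg Prod.fst heq
        have h2 := congrArg (fun (e : (↥S) ↪ Fin r) => (e ⟨i, hij.1⟩ : ℕ)) h1
        exact h2
      have hcol : colc M1 S j = colc M2 S j := by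
        have h1 := congrArg (fun (x : β) => (x.2.1 ⟨j, hij.2⟩ : ℕ)) heq
        simpa [hF] using h1
      have hr1 := recon (r := r) hbad1 hS hij.1 hij.2 (i := i) (j := j)
      have hr2 := recon (r := r) hbad2 hS hij.1 hij.2 (i := i) (j := j)
      cases hb1 : M1 i j <;> cases hb2 : M2 i j
      · rfl
      · exfalso
        have := hr2.mp hb2
        rw [← hpos, ← hcol] at this
        rw [hr1.mpr this] at hb1; exact Bool.noConfusion hb1
      · exfalso
        have := hr1.mp hb1
        rw [hpos, hcol] at this
        rw [hr2.mpr this] at hb2; exact Bool.noConfusion hb2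
      · rfl
    · have h1 := congrArg (fun (x : β) => x.2.2 ⟨(i, j), hij⟩) heq
      simpa [hF] using h1
  calc ((Finset.univ : Finset (Fin m → Fin m → Bool)).filter (fun M => ¬ GoodM M S T)).card
      ≤ (Finset.univ : Finset β).card :=
        Finset.card_le_card_of_injOn F (fun M _ => Finset.mem_univ (F M)) hinj
    _ = Fintype.card β := Finset.card_univ
    _ = r.factorial * (r+1)^r * 2^(m*m - r*r) := hcardβ

lemma exists_goodM {m r : ℕ} (hrm : r ≤ m)
    (hcount : (m.choose r)^2 * (r.factorial * (r+1)^r) < 2^(r*r)) :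
    ∃ M : Fin m → Fin m → Bool, ∀ S T : Finset (Fin m),
      S.card = r → T.card = r → GoodM M S T := by
  classical
  by_contra hcon
  push_neg at hcon
  set B : ℕ := r.factorial * (r+1)^r * 2^(m*m - r*r) with hB
  set P : Finset (Finset (Fin m) × Finset (Fin m)) :=
    Finset.univ.powersetCard r ×ˢ Finset.univ.powersetCard r with hP
  set f : Finset (Fin m) × Finset (Fin m) → Finset (Fin m → Fin m → Bool) :=
    fun p => Finset.univ.filter (fun M => ¬ GoodM M p.1 p.2) with hf
  have hcover : (Finset.univ : Finset (Fin m → Fin m → Bool)) ⊆ P.biUnion f := by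
    intro M _
    obtain ⟨S, T, hS, hT, hbad⟩ := hcon M
    refine Finset.mem_biUnion.mpr ⟨(S, T), ?_, ?_⟩
    · exact Finset.mem_product.mpr ⟨Finset.mem_powersetCard.mpr ⟨Finset.subset_univ _, hS⟩,
        Finset.mem_powersetCard.mpr ⟨Finset.subset_univ _, hT⟩⟩
    · exact Finset.mem_filter.mpr ⟨Finset.mem_univ _, hbad⟩
  have hcardP : P.card = (m.choose r)^2 := by
    rw [hP, Finset.card_product, Finset.card_powersetCard, Finset.card_fin, sq]
  have huniv : (Finset.univ : Finset (Fin m → Fin m → Bool)).card = 2^(m*m) := by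
    rw [Finset.card_univ, Fintype.card_fun, Fintype.card_fun, Fintype.card_bool,
      Fintype.card_fin, ← pow_mul]
  have h1 := Finset.card_le_card hcover
  have h2 := Finset.card_biUnion_le (s := P) (t := f)
  have h3 : ∑ p ∈ P, (f p).card ≤ P.card * B := by
    rw [← smul_eq_mul]
    apply Finset.sum_le_card_nsmul
    intro p hp
    obtain ⟨hp1, hp2⟩ := Finset.mem_product.mp hp
    exact card_bad_le (Finset.mem_powersetCard.mp hp1).2 (Finset.mem_powersetCard.mp hp2).2
  have hlt : P.card * B < 2^(m*m) := by
    have hle : r*r ≤ m*m := Nat.mul_le_mul hrm hrm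
    have hsplit : 2^(r*r) * 2^(m*m - r*r) = 2^(m*m) := by
      rw [← pow_add]; congr 1; omega
    calc P.card * B = ((m.choose r)^2 * (r.factorial * (r+1)^r)) * 2^(m*m - r*r) := by
          rw [hcardP, hB]; ring
      _ < 2^(r*r) * 2^(m*m - r*r) :=
          mul_lt_mul_of_pos_right hcount (by positivity)
      _ = 2^(m*m) := hsplit
  rw [huniv] at h1
  exact absurd (h1.trans (h2.trans h3)) (not_le.mpr hlt)

def orientOf {m : ℕ} (M : Fin m → Fin m → Bool) :
    (Fin m ⊕ Fin m) → (Fin m ⊕ Fin m) → Prop := fun p q =>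
  match p, q with
  | Sum.inl i, Sum.inr j => M i j = true
  | Sum.inr j, Sum.inl i => M i j = false
  | _, _ => False

lemma orientOf_isOrientation {m : ℕ} (M : Fin m → Fin m → Bool) :
    IsOrientation (completeBipartiteGraph (Fin m) (Fin m)) (orientOf M) := by
  constructor
  · intro u v huv
    cases u <;> cases v <;> simp_all [orientOf, completeBipartiteGraph]
  · intro u v hadj
    cases u with
    | inl i => cases v with
      | inl i' => simp [completeBipartiteGraph] at hadj
      | inr j => cases hM : M i j <;> simp [orientOf, hM]
    | inr j => cases v with
      | inl i => cases hM : M i j <;> simp [orientOf, hM]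
      | inr j' => simp [completeBipartiteGraph] at hadj

lemma hasDirCycle_of_good {m : ℕ} {M : Fin m → Fin m → Bool} {S T : Finset (Fin m)}
    (hg : GoodM M S T) :
    HasDirCycleOn (orientOf M)
      {p : Fin m ⊕ Fin m | (∃ i ∈ S, p = Sum.inl i) ∨ (∃ j ∈ T, p = Sum.inr j)} := by
  obtain ⟨i, hi, i', hi', j, hj, j', hj', g1, g2, g3, g4⟩ := hg
  set A : Set (Fin m ⊕ Fin m) :=
    {p : Fin m ⊕ Fin m | (∃ i ∈ S, p = Sum.inl i) ∨ (∃ j ∈ T, p = Sum.inr j)} with hA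
  have hAi : Sum.inl i ∈ A := Or.inl ⟨i, hi, rfl⟩
  have hAi' : Sum.inl i' ∈ A := Or.inl ⟨i', hi', rfl⟩
  have hAj : Sum.inr j ∈ A := Or.inr ⟨j, hj, rfl⟩
  have hAj' : Sum.inr j' ∈ A := Or.inr ⟨j', hj', rfl⟩
  exact ⟨Sum.inl i, hAi,
    Relation.TransGen.head ⟨hAi, hAj, g1⟩
      (Relation.TransGen.head ⟨hAj, hAi', g2⟩
        (Relation.TransGen.head ⟨hAi', hAj', g3⟩
          (Relation.TransGen.single ⟨hAj', hAi, g4⟩)))⟩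

/-- There is an orientation of `K_{m,m}` (with `2 + 2 log₂ m ≤ r`) such that no
copy of `K_{r,r}`, given by choosing `r` vertices on each side of the
bipartition, is acyclic. -/
theorem exists_orientation_no_acyclic_Krr (m r : ℕ) (hm : 0 < m) (hr : 0 < r)
    (h : 2 + 2 * Real.logb 2 (m : ℝ) ≤ (r : ℝ)) :
    ∃ D : (Fin m ⊕ Fin m) → (Fin m ⊕ Fin m) → Prop,
      IsOrientation (completeBipartiteGraph (Fin m) (Fin m)) D ∧
      ∀ S T : Finset (Fin m), S.card = r → T.card = r →
        HasDirCycleOn D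
          {p : Fin m ⊕ Fin m | (∃ i ∈ S, p = Sum.inl i) ∨ (∃ j ∈ T, p = Sum.inr j)} := by
  by_cases hrm : r ≤ m
  · have hr2 : 2 ≤ r := by
      have hlogb : (0:ℝ) ≤ Real.logb 2 (m : ℝ) :=
        Real.logb_nonneg one_lt_two (by exact_mod_cast hm)
      have : (2:ℝ) ≤ (r:ℝ) := by linarith
      exact_mod_cast this
    obtain ⟨M, hM⟩ := exists_goodM hrm (count_lt m r hm hr2 h)
    exact ⟨orientOf M, orientOf_isOrientation M,
      fun S T hS hT => hasDirCycle_of_good (hM S T hS hT)⟩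
  · refine ⟨orientOf (fun _ _ => true), orientOf_isOrientation _, fun S T hS hT => ?_⟩
    exfalso
    apply hrm
    calc r = S.card := hS.symm
      _ ≤ (Finset.univ : Finset (Fin m)).card := Finset.card_le_card (Finset.subset_univ S)
      _ = m := Finset.card_fin m
end

section
/- Let n, k, t, x be nonnegative integers with 0 < k < n and x < k·t. Then the Kneser graph KG(n·t, k·t − x) contains the blow-up of KG(n, k) with power C(k(t−1), x) as a subgraph. Furthermore, if x < t it contains the blow-up of KG(n, k) with power C(k·t, x), and if x = t it contains the blow-up of KG(n, k) with power C(k·t, x) − k. -/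
/-- The Kneser graph `KG(n,k)`: vertices are the `k`-element subsets of an
`n`-element set, adjacent iff disjoint. -/
def kneserG (n k : ℕ) : SimpleGraph {s : Finset (Fin n) // s.card = k} where
  Adj a b := a ≠ b ∧ Disjoint a.val b.val
  symm := ⟨fun _ _ h => ⟨h.1.symm, h.2.symm⟩⟩
  loopless := ⟨fun _ h => h.1 rfl⟩

/-- `G` contains the blow-up of `H` with power `m` as a subgraph: there is an
injective graph homomorphism (preserving adjacency) from `H^(m)` into `G`. -/
def ContainsBlowup {β α : Type*} (G : SimpleGraph β) (H : SimpleGraph α) (m : ℕ) : Prop :=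
  ∃ f : α × Fin m → β, Function.Injective f ∧
    ∀ a b : α × Fin m, (blowup H m).Adj a b → G.Adj (f a) (f b)

lemma master (n k t x m : ℕ) (hx : x < k * t)
    (g : {s : Finset (Fin n) // s.card = k} → Fin m → Finset (Fin n × Fin t))
    (hsub : ∀ S i, g S i ⊆ S.val ×ˢ Finset.univ)
    (hcard : ∀ S i, (g S i).card = x)
    (hginj : ∀ S, Function.Injective (g S))
    (hproj : ∀ S i, ((S.val ×ˢ (Finset.univ : Finset (Fin t))) \ g S i).image Prod.fst = S.val) :
    ContainsBlowup (kneserG (n * t) (k * t - x)) (kneserG n k) m := by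
  set D : {s : Finset (Fin n) // s.card = k} → Fin m → Finset (Fin n × Fin t) :=
    fun S i => (S.val ×ˢ (Finset.univ : Finset (Fin t))) \ g S i with hD
  have hprodcard : ∀ S : {s : Finset (Fin n) // s.card = k},
      (S.val ×ˢ (Finset.univ : Finset (Fin t))).card = k * t := by
    intro S
    rw [Finset.card_product, S.2, Finset.card_univ, Fintype.card_fin]
  have hDcard : ∀ S i, (D S i).card = k * t - x := by
    intro S i
    rw [hD]; simp only
    rw [Finset.card_sdiff_of_subset (hsub S i), hprodcard, hcard]
  have hDinj : Function.Injective (fun p : {s : Finset (Fin n) // s.card = k} × Fin m => D p.1 p.2) := by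
    rintro ⟨S, i⟩ ⟨S', j⟩ h
    simp only at h
    have hSS : S = S' := by
      apply Subtype.ext
      have : D S i = ↑S ×ˢ Finset.univ \ g S i := rfl
      rw [← hproj S i, ← hproj S' j, ← this, h]
    subst hSS
    have : g S i = g S j := by
      have h1 := Finset.sdiff_sdiff_eq_self (hsub S i)
      have h2 := Finset.sdiff_sdiff_eq_self (hsub S j)
      rw [← h1, ← h2]
      exact congrArg _ h
    exact Prod.ext rfl (hginj S this)
  refine ⟨fun p => ⟨(D p.1 p.2).image (finProdFinEquiv : Fin n × Fin t ≃ Fin (n * t)),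
    by rw [Finset.card_image_of_injective _ (Equiv.injective _)]; exact hDcard p.1 p.2⟩, ?_, ?_⟩
  · rintro a b h
    have h' : (D a.1 a.2).image ⇑finProdFinEquiv = (D b.1 b.2).image ⇑finProdFinEquiv :=
      congrArg Subtype.val h
    have := Finset.image_injective (Equiv.injective finProdFinEquiv) h'
    have := hDinj this
    exact Prod.ext (congrArg Prod.fst this) (congrArg Prod.snd this)
  · rintro ⟨S, i⟩ ⟨S', j⟩ hadj
    obtain ⟨hne, hdisj⟩ : S ≠ S' ∧ Disjoint S.val S'.val := hadj
    have hDdisj : Disjoint (D S i) (D S' j) := by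
      rw [Finset.disjoint_left]
      intro a ha ha'
      have h1 : a ∈ S.val ×ˢ (Finset.univ : Finset (Fin t)) := (Finset.sdiff_subset) ha
      have h2 : a ∈ S'.val ×ˢ (Finset.univ : Finset (Fin t)) := (Finset.sdiff_subset) ha'
      rw [Finset.mem_product] at h1 h2
      exact Finset.disjoint_left.mp hdisj h1.1 h2.1
    constructor
    · intro heq
      have h' : (D S i).image ⇑finProdFinEquiv = (D S' j).image ⇑finProdFinEquiv :=
        congrArg Subtype.val heq
      have hDD := Finset.image_injective (Equiv.injective finProdFinEquiv) h'
      rw [hDD] at hDdisj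
      have : D S' j = ∅ := disjoint_self.mp hDdisj
      have hc := hDcard S' j
      rw [this, Finset.card_empty] at hc
      omega
    · rw [Finset.disjoint_left]
      intro a ha ha'
      simp only [Finset.mem_image] at ha ha'
      obtain ⟨u, hu, hua⟩ := ha
      obtain ⟨v, hv, hva⟩ := ha'
      have : u = v := Equiv.injective finProdFinEquiv (hua.trans hva.symm)
      subst this
      exact Finset.disjoint_left.mp hDdisj hu hv

lemma master' (n k t x m : ℕ) (hx : x < k * t)
    (P : {s : Finset (Fin n) // s.card = k} → Finset (Finset (Fin n × Fin t)))
    (hPcard : ∀ S, (P S).card = m)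
    (hPsub : ∀ S, ∀ A ∈ P S, A ⊆ S.val ×ˢ Finset.univ)
    (hPx : ∀ S, ∀ A ∈ P S, A.card = x)
    (hPproj : ∀ S, ∀ A ∈ P S, ∀ s ∈ S.val, ∃ j, (s, j) ∉ A) :
    ContainsBlowup (kneserG (n * t) (k * t - x)) (kneserG n k) m := by
  classical
  set g : {s : Finset (Fin n) // s.card = k} → Fin m → Finset (Fin n × Fin t) :=
    fun S i => ((P S).equivFin.symm (Fin.cast (hPcard S).symm i)).val with hg
  have hmem : ∀ S i, g S i ∈ P S := fun S i => ((P S).equivFin.symm _).2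
  apply master n k t x m hx g
  · exact fun S i => hPsub S _ (hmem S i)
  · exact fun S i => hPx S _ (hmem S i)
  · intro S a b h
    have h1 : (P S).equivFin.symm (Fin.cast (hPcard S).symm a)
        = (P S).equivFin.symm (Fin.cast (hPcard S).symm b) := Subtype.ext h
    have h2 := (P S).equivFin.symm.injective h1
    have h3 : (Fin.cast (hPcard S).symm a : ℕ) = (Fin.cast (hPcard S).symm b : ℕ) :=
      congrArg Fin.val h2
    exact Fin.ext h3
  · intro S i
    apply Finset.Subset.antisymm
    · intro s hs
      simp only [Finset.mem_image] at hs
      obtain ⟨p, hp, rfl⟩ := hs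
      have := Finset.sdiff_subset hp
      exact (Finset.mem_product.mp this).1
    · intro s hs
      obtain ⟨j, hj⟩ := hPproj S _ (hmem S i) s hs
      exact Finset.mem_image.mpr ⟨(s, j), Finset.mem_sdiff.mpr
        ⟨Finset.mem_product.mpr ⟨hs, Finset.mem_univ _⟩, hj⟩, rfl⟩


/-- **Theorem 3.3.** For nonnegative integers `n,k,t,x` with `0 < k < n` and
`x < k·t`, the Kneser graph `KG(nt, kt−x)` contains the blow-up of `KG(n,k)`
with power `C(k(t−1), x)`; furthermore with power `C(kt, x)` when `x < t`, and
with power `C(kt, x) − k` when `x = t`. -/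
theorem kneser_contains_blowup (n k t x : ℕ) (hk : 0 < k) (hkn : k < n)
    (hx : x < k * t) :
    ContainsBlowup (kneserG (n * t) (k * t - x)) (kneserG n k) ((k * (t - 1)).choose x) ∧
    (x < t → ContainsBlowup (kneserG (n * t) (k * t - x)) (kneserG n k) ((k * t).choose x)) ∧
    (x = t → ContainsBlowup (kneserG (n * t) (k * t - x)) (kneserG n k) ((k * t).choose x - k)) := by
  classical
  have ht : 0 < t := by by_contra h; push_neg at h; interval_cases t <;> omega
  set j₀ : Fin t := ⟨0, ht⟩ with hj₀
  refine ⟨?_, ?_, ?_⟩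
  · -- Case 1: remove x elements avoiding column j₀
    set T : Finset (Fin t) := Finset.univ.erase j₀ with hT
    have hTcard : T.card = t - 1 := by
      rw [hT, Finset.card_erase_of_mem (Finset.mem_univ _), Finset.card_univ, Fintype.card_fin]
    apply master' n k t x _ hx (fun S => (S.val ×ˢ T).powersetCard x)
    · intro S
      rw [Finset.card_powersetCard, Finset.card_product, S.2, hTcard]
    · intro S A hA
      exact (Finset.mem_powersetCard.mp hA).1.trans
        (Finset.product_subset_product_right (Finset.subset_univ T))
    · intro S A hA
      exact (Finset.mem_powersetCard.mp hA).2
    · intro S A hA s hs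
      refine ⟨j₀, fun hmem => ?_⟩
      have := (Finset.mem_powersetCard.mp hA).1 hmem
      rw [Finset.mem_product] at this
      exact (Finset.mem_erase.mp this.2).1 rfl
  · -- Case 2: x < t, remove any x elements
    intro hxt
    apply master' n k t x _ hx (fun S => (S.val ×ˢ Finset.univ).powersetCard x)
    · intro S
      rw [Finset.card_powersetCard, Finset.card_product, S.2, Finset.card_univ,
        Fintype.card_fin]
    · intro S A hA
      exact (Finset.mem_powersetCard.mp hA).1
    · intro S A hA
      exact (Finset.mem_powersetCard.mp hA).2
    · intro S A hA s hs
      by_contra h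
      push_neg at h
      have hsub : ({s} : Finset (Fin n)) ×ˢ (Finset.univ : Finset (Fin t)) ⊆ A := by
        intro p hp
        rw [Finset.mem_product, Finset.mem_singleton] at hp
        obtain ⟨h1, _⟩ := hp
        have := h p.2
        rwa [← h1, Prod.mk.eta] at this
      have hcard := Finset.card_le_card hsub
      rw [Finset.card_product, Finset.card_singleton, Finset.card_univ, Fintype.card_fin,
        one_mul, (Finset.mem_powersetCard.mp hA).2] at hcard
      omega
  · -- Case 3: x = t, remove any t elements except full columns
    rintro rfl
    have hcolinj : Function.Injective
        (fun s : Fin n => ({s} : Finset (Fin n)) ×ˢ (Finset.univ : Finset (Fin x))) := by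
      intro s s' h
      simp only at h
      have : (s, j₀) ∈ ({s'} : Finset (Fin n)) ×ˢ (Finset.univ : Finset (Fin x)) := by
        rw [← h]; exact Finset.mem_product.mpr ⟨Finset.mem_singleton_self _, Finset.mem_univ _⟩
      exact Finset.mem_singleton.mp (Finset.mem_product.mp this).1
    have hcolcard : ∀ s : Fin n,
        (({s} : Finset (Fin n)) ×ˢ (Finset.univ : Finset (Fin x))).card = x := by
      intro s
      rw [Finset.card_product, Finset.card_singleton, Finset.card_univ, Fintype.card_fin,
        one_mul]
    apply master' n k x x _ hx (fun S => (S.val ×ˢ Finset.univ).powersetCard x \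
      S.val.image (fun s => ({s} : Finset (Fin n)) ×ˢ (Finset.univ : Finset (Fin x))))
    · intro S
      have hcols : S.val.image (fun s => ({s} : Finset (Fin n)) ×ˢ
          (Finset.univ : Finset (Fin x))) ⊆ (S.val ×ˢ Finset.univ).powersetCard x := by
        intro c hc
        obtain ⟨s, hs, rfl⟩ := Finset.mem_image.mp hc
        refine Finset.mem_powersetCard.mpr ⟨?_, hcolcard s⟩
        exact Finset.product_subset_product_left (Finset.singleton_subset_iff.mpr hs)
      rw [Finset.card_sdiff_of_subset hcols, Finset.card_powersetCard, Finset.card_product, S.2,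
        Finset.card_univ, Fintype.card_fin, Finset.card_image_of_injective _ hcolinj, S.2]
    · intro S A hA
      exact (Finset.mem_powersetCard.mp (Finset.mem_sdiff.mp hA).1).1
    · intro S A hA
      exact (Finset.mem_powersetCard.mp (Finset.mem_sdiff.mp hA).1).2
    · intro S A hA s hs
      obtain ⟨hA1, hA2⟩ := Finset.mem_sdiff.mp hA
      by_contra h
      push_neg at h
      have hsub : ({s} : Finset (Fin n)) ×ˢ (Finset.univ : Finset (Fin x)) ⊆ A := by
        intro p hp
        rw [Finset.mem_product, Finset.mem_singleton] at hp
        obtain ⟨h1, _⟩ := hp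
        have := h p.2
        rwa [← h1, Prod.mk.eta] at this
      have heq : ({s} : Finset (Fin n)) ×ˢ (Finset.univ : Finset (Fin x)) = A := by
        apply Finset.eq_of_subset_of_card_le hsub
        rw [(Finset.mem_powersetCard.mp hA1).2, hcolcard]
      exact hA2 (Finset.mem_image.mpr ⟨s, hs, heq⟩)
end

section
/- In the setting of the proof of the blow-up bound for complete graphs: let n, k be positive integers with n·k ≥ 2 and let t = max{⌈4·log₂(n·k)⌉, 2k}. Then there exists an orientation of the complete n-partite graph K_n^(k) (each part of size k) such that every vertex-set of size t contains a directed cycle under this orientation. -/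
section AuxLemmas

variable {α : Type*}

lemma exists_rel_min (r : α → α → Prop) (htr : Transitive r) (hirr : ∀ x, ¬ r x x) :
    ∀ (m : ℕ) (B : Finset α), B.card ≤ m → B.Nonempty → ∃ a ∈ B, ∀ b ∈ B, ¬ r b a := by
  classical
  intro m
  induction m with
  | zero =>
      intro B hB hne
      rw [Nat.le_zero, Finset.card_eq_zero] at hB
      subst hB
      exact absurd hne (by simp)
  | succ m ih =>
      intro B hB hne
      obtain ⟨a, ha⟩ := hne
      by_cases h : ∃ b ∈ B, r b a
      · obtain ⟨b, hbB, hba⟩ := h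
        have haB' : a ∉ B.filter (fun x => r x a) := by simp [hirr a]
        have hcard : (B.filter (fun x => r x a)).card ≤ m := by
          have h1 : (B.filter (fun x => r x a)).card < B.card :=
            Finset.card_lt_card
              ((Finset.ssubset_iff_of_subset (Finset.filter_subset _ _)).2 ⟨a, ha, haB'⟩)
          omega
        obtain ⟨c, hcB', hcmin⟩ := ih _ hcard ⟨b, Finset.mem_filter.2 ⟨hbB, hba⟩⟩
        obtain ⟨hcB, hca⟩ := Finset.mem_filter.1 hcB'
        exact ⟨c, hcB, fun x hx hxc => hcmin x (Finset.mem_filter.2 ⟨hx, htr hxc hca⟩) hxc⟩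
      · exact ⟨a, ha, fun b hb hba => h ⟨b, hb, hba⟩⟩

lemma exists_topo_list [DecidableEq α] (r : α → α → Prop) (htr : Transitive r)
    (hirr : ∀ x, ¬ r x x) :
    ∀ (m : ℕ) (B : Finset α), B.card ≤ m →
      ∃ l : List α, l.Nodup ∧ l.toFinset = B ∧ l.Pairwise (fun a b => ¬ r b a) := by
  intro m
  induction m with
  | zero =>
      intro B hB
      rw [Nat.le_zero, Finset.card_eq_zero] at hB
      exact ⟨[], by simp [hB]⟩
  | succ m ih =>
      intro B hB
      rcases B.eq_empty_or_nonempty with he | hne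
      · exact ⟨[], by simp [he]⟩
      · obtain ⟨a, haB, hmin⟩ := exists_rel_min r htr hirr (m+1) B hB hne
        have hc : (B.erase a).card ≤ m := by
          have := Finset.card_erase_of_mem haB
          have := Finset.card_pos.2 ⟨a, haB⟩
          omega
        obtain ⟨l, hnd, hfs, hpw⟩ := ih _ hc
        have hal : a ∉ l := by
          intro h
          exact Finset.notMem_erase a B (hfs ▸ List.mem_toFinset.2 h)
        refine ⟨a :: l, List.nodup_cons.2 ⟨hal, hnd⟩, ?_, ?_⟩
        · simp [List.toFinset_cons, hfs, Finset.insert_erase haB]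
        · refine List.Pairwise.cons ?_ hpw
          intro x hx
          exact hmin x (Finset.mem_of_mem_erase (hfs ▸ List.mem_toFinset.2 hx))

lemma card_eq_two_mul_filter_lt {γ : Type*} [LinearOrder γ] [DecidableEq γ]
    (s : Finset (γ × γ)) (hswap : ∀ p ∈ s, Prod.swap p ∈ s)
    (hne : ∀ p ∈ s, p.1 ≠ p.2) :
    s.card = 2 * (s.filter (fun p => p.1 < p.2)).card := by
  classical
  have key : s.filter (fun p => ¬ p.1 < p.2)
      = (s.filter (fun p => p.1 < p.2)).image Prod.swap := by
    ext ⟨a, b⟩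
    simp only [Finset.mem_filter, Finset.mem_image, Prod.exists]
    constructor
    · rintro ⟨hab, hlt⟩
      refine ⟨b, a, ⟨hswap _ hab, ?_⟩, rfl⟩
      rcases lt_or_gt_of_ne (hne _ hab) with h | h
      · exact absurd h hlt
      · exact h
    · rintro ⟨x, y, ⟨hxy, hlt⟩, heq⟩
      have h1 : y = a ∧ x = b := by
        constructor <;> [exact congrArg Prod.fst heq; exact congrArg Prod.snd heq]
      obtain ⟨rfl, rfl⟩ := h1
      exact ⟨hswap _ hxy, not_lt_of_gt hlt⟩
  have h1 := Finset.card_filter_add_card_filter_not (s := s) (p := fun p => p.1 < p.2)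
  have h2 : ((s.filter (fun p => p.1 < p.2)).image Prod.swap).card
      = (s.filter (fun p => p.1 < p.2)).card :=
    Finset.card_image_of_injective _ Prod.swap_injective
  rw [key] at h1
  omega

lemma arith_main (N k t M : ℕ) (hN : 2 ≤ N) (hk : 1 ≤ k) (h2k : 2*k ≤ t) (h4 : 4 ≤ t)
    (hpow : N^4 ≤ 2^t) (hM : M = (t*(t-k)+1)/2) :
    N.descFactorial t * 2^(N*N - M) < 2^(N*N) := by
  have hDF : N.descFactorial t < 2^M := by
    have h1 : N.descFactorial t ≤ N * (N-1)^(t-1) := by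
      obtain ⟨s, rfl⟩ : ∃ s, t = s + 1 := ⟨t-1, by omega⟩
      have hN1 : N - 1 + 1 = N := by omega
      calc N.descFactorial (s+1) = (N-1+1).descFactorial (s+1) := by rw [hN1]
        _ = (N-1+1) * (N-1).descFactorial s := Nat.succ_descFactorial_succ _ _
        _ ≤ N * (N-1)^(s+1-1) := by
            rw [hN1]
            exact Nat.mul_le_mul_left _ (Nat.descFactorial_le_pow _ _)
    have hpow2 : 0 < 2^t := Nat.pow_pos (by norm_num)
    have h2 : (N.descFactorial t)^4 < 2^(t*t) := by
      calc (N.descFactorial t)^4 ≤ (N * (N-1)^(t-1))^4 := Nat.pow_le_pow_left h1 4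
        _ = N^4 * ((N-1)^4)^(t-1) := by ring
        _ ≤ 2^t * ((N-1)^4)^(t-1) := Nat.mul_le_mul_right _ hpow
        _ ≤ 2^t * (2^t - 1)^(t-1) := by
            apply Nat.mul_le_mul_left
            apply Nat.pow_le_pow_left
            have h3 : (N-1)^4 < N^4 := Nat.pow_lt_pow_left (by omega) (by norm_num)
            omega
        _ < 2^t * (2^t)^(t-1) := by
            apply Nat.mul_lt_mul_of_le_of_lt le_rfl
            · exact Nat.pow_lt_pow_left (by omega) (by omega)
            · exact hpow2
        _ = 2^(t + t*(t-1)) := by rw [← pow_mul, ← pow_add]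
        _ = 2^(t*t) := by
            congr 1
            obtain ⟨s, rfl⟩ : ∃ s, t = s + 1 := ⟨t-1, by omega⟩
            simp [Nat.succ_sub_one]
            ring
    have h3 : t*t ≤ 4*M := by
      have e1 : t ≤ 2*(t-k) := by omega
      have e2 : t*t ≤ t*(2*(t-k)) := Nat.mul_le_mul_left t e1
      have e3 : t*(2*(t-k)) = 2*(t*(t-k)) := by ring
      omega
    by_contra hge
    push_neg at hge
    have h5 : (2^M)^4 ≤ (N.descFactorial t)^4 := Nat.pow_le_pow_left hge 4
    rw [← pow_mul] at h5
    have h6 : (2:ℕ)^(t*t) ≤ 2^(M*4) := Nat.pow_le_pow_right (by norm_num) (by omega)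
    omega
  by_cases htN : t ≤ N
  · have hMle : M ≤ N*N := by
      have e1 : t*(t-k) ≤ t*t := Nat.mul_le_mul_left t (Nat.sub_le _ _)
      have e2 : t*t ≤ N*N := Nat.mul_le_mul htN htN
      omega
    calc N.descFactorial t * 2^(N*N - M) < 2^M * 2^(N*N-M) :=
          Nat.mul_lt_mul_of_lt_of_le hDF le_rfl (Nat.pow_pos (by norm_num))
      _ = 2^(M + (N*N - M)) := (pow_add 2 _ _).symm
      _ = 2^(N*N) := by rw [Nat.add_sub_cancel' hMle]
  · have h0 : N.descFactorial t = 0 := Nat.descFactorial_eq_zero_iff_lt.2 (by omega)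
    rw [h0, Nat.zero_mul]
    exact Nat.pow_pos (by norm_num)

end AuxLemmas

set_option maxHeartbeats 1000000 in
/-- There is an orientation of the complete `n`-partite graph `K_n^(k)` (the
blow-up of `K_n` with power `k`) such that every vertex-set of size
`t = max{⌈4 log₂(nk)⌉, 2k}` contains a directed cycle. -/
theorem exists_orientation_blowup_complete_cyclic (n k : ℕ) (hn : 0 < n)
    (hk : 0 < k) (hnk : 2 ≤ n * k) :
    ∃ D : (Fin n × Fin k) → (Fin n × Fin k) → Prop,
      IsOrientation (blowup (SimpleGraph.completeGraph (Fin n)) k) D ∧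
      ∀ A : Finset (Fin n × Fin k),
        A.card = max ⌈4 * Real.logb 2 ((n * k : ℕ) : ℝ)⌉₊ (2 * k) →
        HasDirCycleOn D (A : Set (Fin n × Fin k)) := by
  classical
  set t := max ⌈4 * Real.logb 2 ((n * k : ℕ) : ℝ)⌉₊ (2 * k) with ht
  -- encoding of vertices into ℕ
  set e : Fin n × Fin k → ℕ := fun v => k * v.1.val + v.2.val with hedef
  have he : Function.Injective e := by
    rintro ⟨a, b⟩ ⟨c, d⟩ h
    simp only [hedef] at h
    have hb := b.isLt
    have hd := d.isLt
    have h1 : (k * a.val + b.val) / k = (k * c.val + d.val) / k := by rw [h]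
    rw [Nat.mul_add_div hk, Nat.mul_add_div hk, Nat.div_eq_of_lt hb, Nat.div_eq_of_lt hd] at h1
    have h3 : a.val = c.val := by omega
    rw [h3] at h
    have h2 : b.val = d.val := by omega
    exact Prod.ext (Fin.ext h3) (Fin.ext h2)
  -- the digraph determined by f
  set Dor : ((Fin n × Fin k) × (Fin n × Fin k) → Bool) → (Fin n × Fin k) → (Fin n × Fin k) → Prop :=
    fun f u v => u.1 ≠ v.1 ∧ ((e u < e v ∧ f (u, v) = true) ∨ (e v < e u ∧ f (v, u) = false))
    with hDor
  have hiff : ∀ f u v, u.1 ≠ v.1 → (Dor f u v ↔ ¬ Dor f v u) := by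
    intro f u v hne1
    have hne : e u ≠ e v := fun h => hne1 (congrArg Prod.fst (he h))
    rcases lt_or_gt_of_ne hne with h | h
    · constructor
      · rintro ⟨-, h1⟩ ⟨-, h2⟩
        rcases h1 with ⟨-, hf⟩ | ⟨hlt, -⟩
        · rcases h2 with ⟨hlt, -⟩ | ⟨-, hf'⟩
          · exact absurd hlt (asymm h)
          · rw [hf] at hf'; cases hf'
        · exact absurd hlt (asymm h)
      · intro hnd
        refine ⟨hne1, Or.inl ⟨h, ?_⟩⟩
        by_contra hf
        have hf' : f (u, v) = false := by
          cases hfv : f (u, v)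
          · rfl
          · exact absurd hfv hf
        exact hnd ⟨hne1.symm, Or.inr ⟨h, hf'⟩⟩
    · constructor
      · rintro ⟨-, h1⟩ ⟨-, h2⟩
        rcases h1 with ⟨hlt, -⟩ | ⟨-, hf⟩
        · exact absurd hlt (asymm h)
        · rcases h2 with ⟨-, hf'⟩ | ⟨hlt, -⟩
          · rw [hf] at hf'; cases hf'
          · exact absurd hlt (asymm h)
      · intro hnd
        by_cases hfv : f (v, u) = false
        · exact ⟨hne1, Or.inr ⟨h, hfv⟩⟩
        · have hf' : f (v, u) = true := by
            cases hfv2 : f (v, u)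
            · exact absurd hfv2 hfv
            · rfl
          exact absurd ⟨hne1.symm, Or.inl ⟨h, hf'⟩⟩ hnd
  have horient : ∀ f, IsOrientation (blowup (SimpleGraph.completeGraph (Fin n)) k) (Dor f) := by
    intro f
    constructor
    · intro u v h
      show (SimpleGraph.completeGraph (Fin n)).Adj u.1 v.1
      simpa [SimpleGraph.completeGraph] using h.1
    · intro u v hadj
      have hne1 : u.1 ≠ v.1 := by
        have : (SimpleGraph.completeGraph (Fin n)).Adj u.1 v.1 := hadj
        simpa [SimpleGraph.completeGraph] using this
      exact hiff f u v hne1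
  have htour : ∀ f u v, u.1 ≠ v.1 → ¬ Dor f v u → Dor f u v := by
    intro f u v hne h
    exact (hiff f u v hne).2 h
  -- main existence
  have hmain : ∃ f : (Fin n × Fin k) × (Fin n × Fin k) → Bool,
      ∀ A : Finset (Fin n × Fin k), A.card = t → ¬ IsAcyclicOn (Dor f) (A : Set (Fin n × Fin k)) := by

    by_contra hcon
    push_neg at hcon
    set M := (t * (t - k) + 1) / 2 with hM
    have h2k : 2*k ≤ t := le_max_right _ _
    set Compat : (Fin t ↪ Fin n × Fin k) → ((Fin n × Fin k) × (Fin n × Fin k) → Bool) → Prop :=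
      fun c f => ∀ i j : Fin t, i < j → (c i).1 ≠ (c j).1 → Dor f (c i) (c j) with hCompat
    have hsub : (Finset.univ : Finset ((Fin n × Fin k) × (Fin n × Fin k) → Bool)) ⊆
        Finset.univ.biUnion
          (fun c : Fin t ↪ Fin n × Fin k => Finset.univ.filter (Compat c)) := by
      intro f _
      obtain ⟨A, hAcard, hacyc⟩ := hcon f
      set step : (Fin n × Fin k) → (Fin n × Fin k) → Prop :=
        fun a b => a ∈ (A : Set (Fin n × Fin k)) ∧ b ∈ (A : Set (Fin n × Fin k)) ∧ Dor f a b
        with hstep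
      set r := Relation.TransGen step with hr
      have htr : Transitive r := fun a b c hab hbc => Relation.TransGen.trans hab hbc
      have hmemr : ∀ a b, r a b → a ∈ (A : Set (Fin n × Fin k)) := by
        intro a b hab
        obtain ⟨c, hc, -⟩ := (Relation.TransGen.head'_iff).1 hab
        exact hc.1
      have hirr : ∀ x, ¬ r x x := fun x hx => hacyc x (hmemr x x hx) hx
      obtain ⟨l, hnd, hfs, hpw⟩ := exists_topo_list r htr hirr A.card A le_rfl
      have hlen : l.length = t := by rw [← hAcard, ← hfs, List.toFinset_card_of_nodup hnd]
      have hgetinj : Function.Injective l.get := List.nodup_iff_injective_get.1 hnd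
      set c : Fin t ↪ (Fin n × Fin k) :=
        ⟨fun i => l.get (Fin.cast hlen.symm i), by
          intro i j hij
          have h1 := hgetinj hij
          have h2 := congrArg Fin.val h1
          exact Fin.ext h2⟩ with hcdef
      have hmemA : ∀ i : Fin t, c i ∈ (A : Set (Fin n × Fin k)) := by
        intro i
        rw [← hfs]
        exact List.mem_toFinset.2 (List.get_mem l (Fin.cast hlen.symm i))
      refine Finset.mem_biUnion.2 ⟨c, Finset.mem_univ _,
        Finset.mem_filter.2 ⟨Finset.mem_univ _, ?_⟩⟩
      intro i j hij hne
      apply htour f _ _ hne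
      intro hD
      have hstep1 : step (c j) (c i) := ⟨hmemA j, hmemA i, hD⟩
      have hpw' := List.pairwise_iff_get.1 hpw (Fin.cast hlen.symm i) (Fin.cast hlen.symm j)
        hij
      exact hpw' (Relation.TransGen.single hstep1)
    have hcompat_card : ∀ c : Fin t ↪ Fin n × Fin k,
        (Finset.univ.filter (Compat c)).card ≤ 2 ^ ((n*k)*(n*k) - M) := by
      intro c
      set P := Finset.univ.filter
        (fun p : Fin t × Fin t => p.1 < p.2 ∧ (c p.1).1 ≠ (c p.2).1) with hPdef
      have hPcard : M ≤ P.card := by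
        set s2 := Finset.univ.filter
          (fun p : Fin t × Fin t => p.1 ≠ p.2 ∧ (c p.1).1 ≠ (c p.2).1) with hs2
        have hhalf : s2.card = 2 * P.card := by
          rw [card_eq_two_mul_filter_lt s2 ?_ ?_]
          · congr 1
            rw [hs2, Finset.filter_filter, hPdef]
            apply congrArg Finset.card
            apply Finset.filter_congr
            intro p _
            constructor
            · rintro ⟨⟨h1, h2⟩, h3⟩; exact ⟨h3, h2⟩
            · rintro ⟨h1, h2⟩; exact ⟨⟨ne_of_lt h1, h2⟩, h1⟩
          · rintro ⟨a, b⟩ hp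
            simp only [hs2, Finset.mem_filter, Finset.mem_univ, true_and] at hp ⊢
            exact ⟨hp.1.symm, hp.2.symm⟩
          · intro p hp
            exact (Finset.mem_filter.1 hp).2.1
        have hdiag : (Finset.univ.filter (fun p : Fin t × Fin t => p.1 = p.2)).card = t := by
          have himg : Finset.univ.filter (fun p : Fin t × Fin t => p.1 = p.2)
              = Finset.univ.image (fun i : Fin t => (i, i)) := by
            ext ⟨a, b⟩
            simp only [Finset.mem_filter, Finset.mem_univ, true_and, Finset.mem_image,
              Prod.mk.injEq]
            constructor
            · rintro rfl; exact ⟨a, rfl, rfl⟩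
            · rintro ⟨i, rfl, rfl⟩; rfl
          rw [himg, Finset.card_image_of_injective _
            (fun a b h => congrArg Prod.fst h), Finset.card_univ, Fintype.card_fin]
        have htot : (Finset.univ.filter (fun p : Fin t × Fin t => p.1 = p.2)).card
            + (Finset.univ.filter (fun p : Fin t × Fin t => ¬ p.1 = p.2)).card = t * t := by
          rw [Finset.card_filter_add_card_filter_not, Finset.card_univ]
          simp [Fintype.card_prod]
        set od := Finset.univ.filter (fun p : Fin t × Fin t => ¬ p.1 = p.2) with hod
        have hsplit : (od.filter (fun p => (c p.1).1 = (c p.2).1)).card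
            + (od.filter (fun p => ¬ (c p.1).1 = (c p.2).1)).card = od.card :=
          Finset.card_filter_add_card_filter_not _
        have hs2' : od.filter (fun p => ¬ (c p.1).1 = (c p.2).1) = s2 := by
          rw [hod, Finset.filter_filter, hs2]
        have hsame : (od.filter (fun p => (c p.1).1 = (c p.2).1)).card ≤ (k-1) * t := by
          set sm := od.filter (fun p => (c p.1).1 = (c p.2).1) with hsm
          have hfib : ∀ a ∈ sm.image Prod.fst,
              (sm.filter (fun p => p.1 = a)).card ≤ k - 1 := by
            intro a ha
            have hsubF : (sm.filter (fun p => p.1 = a)).card ≤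
                ((Finset.univ.filter (fun j : Fin t => (c j).1 = (c a).1)).erase a).card := by
              apply Finset.card_le_card_of_injOn (fun p => p.2)
              · intro p hp
                simp only [hsm, hod, Finset.mem_filter, Finset.mem_univ, true_and,
                  Finset.filter_filter, Finset.mem_coe] at hp
                obtain ⟨⟨hne, hpe⟩, hpa⟩ := hp
                apply Finset.mem_erase.2
                refine ⟨?_, ?_⟩
                · intro hcontra; apply hne; rw [hpa, show p.2 = a from hcontra]
                · simp only [Finset.mem_filter, Finset.mem_univ, true_and]
                  rw [← hpa]; exact hpe.symm
              · intro p hp q hq hpq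
                simp only [Finset.coe_filter, Set.mem_setOf_eq] at hp hq
                exact Prod.ext (hp.2.trans hq.2.symm) hpq
            have hG : (Finset.univ.filter (fun j : Fin t => (c j).1 = (c a).1)).card ≤ k := by
              have := Finset.card_le_card_of_injOn (fun j => (c j).2)
                (fun x _ => Finset.mem_univ ((c x).2))
                (s := Finset.univ.filter (fun j : Fin t => (c j).1 = (c a).1))
                (t := (Finset.univ : Finset (Fin k))) ?_
              · simpa using this
              · intro x hx y hy hxy
                simp only [Finset.coe_filter, Set.mem_setOf_eq] at hx hy
                apply c.injective
                exact Prod.ext (hx.2.trans hy.2.symm) hxy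
            have haG : a ∈ Finset.univ.filter (fun j : Fin t => (c j).1 = (c a).1) := by simp
            have herase := Finset.card_erase_of_mem haG
            omega
          calc sm.card ≤ (k-1) * (sm.image Prod.fst).card :=
                Finset.card_le_mul_card_image sm (k-1) hfib
            _ ≤ (k-1) * t := by
                apply Nat.mul_le_mul_left
                calc (sm.image Prod.fst).card ≤ (Finset.univ : Finset (Fin t)).card :=
                      Finset.card_le_card (Finset.subset_univ _)
                  _ = t := by simp
        have e1 : t*(t-k) + t*k = t*t := by
          rw [← Nat.mul_add]
          congr 1
          omega
        have e2 : (k-1)*t + t = k*t := by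
          have h1 : ((k-1)+1) * t = (k-1)*t + 1*t := Nat.add_mul _ _ _
          have hkk : k - 1 + 1 = k := by omega
          rw [hkk] at h1
          omega
        have e3 : t*k = k*t := Nat.mul_comm _ _
        rw [hs2'] at hsplit
        omega
      set sp : Fin t × Fin t → (Fin n × Fin k) × (Fin n × Fin k) :=
        fun p => if e (c p.1) < e (c p.2) then (c p.1, c p.2) else (c p.2, c p.1) with hsp
      set S := P.image sp with hS
      have hspinj : Set.InjOn sp ↑P := by
        rintro p hp q hq hpq
        simp only [hPdef, Finset.coe_filter, Finset.mem_univ, true_and,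
          Set.mem_setOf_eq] at hp hq
        by_cases h1 : e (c p.1) < e (c p.2) <;> by_cases h2 : e (c q.1) < e (c q.2) <;>
          simp only [hsp, h1, h2, if_true, if_false, Prod.mk.injEq] at hpq
        · exact Prod.ext (c.injective hpq.1) (c.injective hpq.2)
        · have f1 : p.1 = q.2 := c.injective hpq.1
          have f2 : p.2 = q.1 := c.injective hpq.2
          have h3 := hp.1
          rw [f1, f2] at h3
          exact absurd hq.1 (asymm h3)
        · have f1 : p.1 = q.2 := c.injective hpq.2
          have f2 : p.2 = q.1 := c.injective hpq.1
          have h3 := hp.1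
          rw [f1, f2] at h3
          exact absurd hq.1 (asymm h3)
        · exact Prod.ext (c.injective hpq.2) (c.injective hpq.1)
      have hdet : ∀ f g : (Fin n × Fin k) × (Fin n × Fin k) → Bool,
          Compat c f → Compat c g → ∀ x ∈ S, f x = g x := by
        intro f g hf hg x hx
        rw [hS] at hx
        obtain ⟨p, hp, rfl⟩ := Finset.mem_image.1 hx
        rw [hPdef] at hp
        obtain ⟨-, hlt, hne⟩ := Finset.mem_filter.1 hp
        have hDf := hf p.1 p.2 hlt hne
        have hDg := hg p.1 p.2 hlt hne
        by_cases h1 : e (c p.1) < e (c p.2)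
        · simp only [hsp, if_pos h1]
          rcases hDf.2 with ⟨-, hfv⟩ | ⟨hlt', -⟩
          · rcases hDg.2 with ⟨-, hgv⟩ | ⟨hlt', -⟩
            · rw [hfv, hgv]
            · exact absurd hlt' (asymm h1)
          · exact absurd hlt' (asymm h1)
        · simp only [hsp, if_neg h1]
          rcases hDf.2 with ⟨hlt', -⟩ | ⟨-, hfv⟩
          · exact absurd hlt' h1
          · rcases hDg.2 with ⟨hlt', -⟩ | ⟨-, hgv⟩
            · exact absurd hlt' h1
            · rw [hfv, hgv]
      have hinj : (Finset.univ.filter (Compat c)).card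
          ≤ (Finset.univ : Finset ((↥(Sᶜ)) → Bool)).card := by
        apply Finset.card_le_card_of_injOn (fun f => fun x : ↥(Sᶜ) => f ↑x)
          (fun _ _ => Finset.mem_univ _)
        intro f hf g hg hfg
        simp only [Finset.coe_filter, Set.mem_setOf_eq, Finset.mem_univ, true_and] at hf hg
        funext x
        by_cases hx : x ∈ S
        · exact hdet f g hf hg x hx
        · exact congrFun hfg ⟨x, Finset.mem_compl.2 hx⟩
      have hcards : (Finset.univ : Finset ((↥(Sᶜ)) → Bool)).card
          = 2 ^ (Sᶜ : Finset ((Fin n × Fin k) × (Fin n × Fin k))).card := by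
        rw [Finset.card_univ, Fintype.card_fun, Fintype.card_coe, Fintype.card_bool]
      have hScard : S.card = P.card := by
        rw [hS]
        exact Finset.card_image_of_injOn hspinj
      have hcompl : (Sᶜ : Finset ((Fin n × Fin k) × (Fin n × Fin k))).card
          = (n*k)*(n*k) - S.card := by
        rw [Finset.card_compl]
        congr 1
        simp [Fintype.card_prod, Fintype.card_fin]
      calc (Finset.univ.filter (Compat c)).card
          ≤ 2 ^ ((n*k)*(n*k) - S.card) := by rw [← hcompl, ← hcards]; exact hinj
        _ ≤ 2 ^ ((n*k)*(n*k) - M) := by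
            apply Nat.pow_le_pow_right (by norm_num)
            apply Nat.sub_le_sub_left
            exact hScard ▸ hPcard
    have hcardO : (Finset.univ : Finset ((Fin n × Fin k) × (Fin n × Fin k) → Bool)).card
        = 2 ^ ((n*k)*(n*k)) := by
      rw [Finset.card_univ, Fintype.card_fun, Fintype.card_bool]
      congr 1
      simp [Fintype.card_prod, Fintype.card_fin]
    have hchain : (2:ℕ) ^ ((n*k)*(n*k)) ≤ (n*k).descFactorial t * 2 ^ ((n*k)*(n*k) - M) := by
      calc (2:ℕ) ^ ((n*k)*(n*k))
          = (Finset.univ : Finset ((Fin n × Fin k) × (Fin n × Fin k) → Bool)).card := hcardO.symm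
        _ ≤ (Finset.univ.biUnion
              (fun c : Fin t ↪ Fin n × Fin k => Finset.univ.filter (Compat c))).card :=
            Finset.card_le_card hsub
        _ ≤ ∑ c : Fin t ↪ Fin n × Fin k, (Finset.univ.filter (Compat c)).card :=
            Finset.card_biUnion_le
        _ ≤ ∑ _c : Fin t ↪ Fin n × Fin k, 2 ^ ((n*k)*(n*k) - M) :=
            Finset.sum_le_sum (fun c _ => hcompat_card c)
        _ = (Fintype.card (Fin t ↪ Fin n × Fin k)) * 2 ^ ((n*k)*(n*k) - M) := by
            rw [Finset.sum_const, Finset.card_univ, smul_eq_mul]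
        _ = (n*k).descFactorial t * 2 ^ ((n*k)*(n*k) - M) := by
            rw [Fintype.card_embedding_eq]
            simp [Fintype.card_prod, Fintype.card_fin]
    have hceil : ⌈4 * Real.logb 2 ((n*k : ℕ) : ℝ)⌉₊ ≤ t := le_max_left _ _
    have hlogle : (4 : ℝ) * Real.logb 2 ((n*k:ℕ):ℝ) ≤ (t : ℝ) :=
      le_trans (Nat.le_ceil _) (by exact_mod_cast hceil)
    have hNR : (2:ℝ) ≤ ((n*k:ℕ):ℝ) := by exact_mod_cast hnk
    have hlog1 : (1:ℝ) ≤ Real.logb 2 ((n*k:ℕ):ℝ) := by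
      have h1 := Real.logb_le_logb_of_le (b := 2) (by norm_num) (by norm_num : (0:ℝ) < 2) hNR
      rwa [Real.logb_self_eq_one (by norm_num)] at h1
    have h4t : 4 ≤ t := by
      have h1 : (4:ℝ) ≤ (t:ℝ) := by linarith
      exact_mod_cast h1
    have hpow : (n*k)^4 ≤ 2^t := by
      have h1 : ((n*k:ℕ):ℝ)^4 ≤ (2:ℝ) ^ (t:ℝ) := by
        have hposnk : (0:ℝ) < ((n*k:ℕ):ℝ) := by linarith
        have h2 : ((n*k:ℕ):ℝ)^4 = (2:ℝ) ^ (Real.logb 2 (((n*k:ℕ):ℝ)^4)) := by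
          rw [Real.rpow_logb (by norm_num) (by norm_num) (pow_pos hposnk 4)]
        rw [h2, Real.logb_pow]
        apply Real.rpow_le_rpow_of_exponent_le (by norm_num)
        push_cast at hlogle ⊢
        linarith
      rw [Real.rpow_natCast] at h1
      exact_mod_cast h1
    have hfinal := arith_main (n*k) k t M hnk hk h2k h4t hpow hM
    omega
  obtain ⟨f, hf⟩ := hmain
  refine ⟨Dor f, horient f, ?_⟩
  intro A hA
  have h1 := hf A hA
  unfold IsAcyclicOn at h1
  unfold HasDirCycleOn
  push_neg at h1
  exact h1
end
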